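/- arXiv:1601.03574 — 8 statements merged into one kernel-verified Lean document; each statement's English description precedes it below -/
import Mathlib

section
/- Let f = (f_m) be a supermartingale relative to a convex set M of mutually equivalent probability measures for which there exist constants 0 < l ≤ L < ∞ with l ≤ dQ₁/dQ₂ ≤ L a.s. for all Q₁, Q₂ ∈ M. Suppose that for some measure P₁ ∈ M there exist a natural number m₀ ≥ 1 and an 𝓕_{m₀−1}-measurable nonnegative random variable φ_{m₀} with P₁(φ_{m₀} > 0) > 0 such that f_{m₀−1} − E^{P₁}[f_{m₀} | 𝓕_{m₀−1}] ≥ φ_{m₀} a.s. Then for every measure Q of the form Q = (1−α)P₁ + αP₂ with P₂ ∈ M and 0 ≤ α ≤ L/(1+L), one has f_{m₀−1} − E^{Q}[f_{m₀} | 𝓕_{m₀−1}] ≥ (l/(1+L)) φ_{m₀} a.s. -/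
open MeasureTheory Filter Set
open scoped ENNReal

/-- **Theorem 1 of the paper.**
Let `f` be a supermartingale relative to a convex set `M` of mutually equivalent
probability measures whose pairwise Radon–Nikodym derivatives are bounded between
`l` and `L`.  If for some `P₁ ∈ M` there are `m₀ ≥ 1` and an `ℱ (m₀ - 1)`-measurable
nonnegative random variable `φ` with `P₁(φ > 0) > 0` such that
`f (m₀-1) - E^{P₁}[f m₀ | ℱ (m₀-1)] ≥ φ` a.s., then for every `Q = (1-α) P₁ + α P₂`
with `P₂ ∈ M` and `0 ≤ α ≤ L/(1+L)` one has
`f (m₀-1) - E^{Q}[f m₀ | ℱ (m₀-1)] ≥ (l/(1+L)) φ` a.s. -/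
theorem stmt0 {Ω : Type*} {m0 : MeasurableSpace Ω}
    (ℱ : Filtration ℕ m0) (hℱ0 : ∀ A, MeasurableSet[ℱ 0] A → A = ∅ ∨ A = Set.univ)
    (M : Set (Measure Ω))
    (hM_prob : ∀ P ∈ M, IsProbabilityMeasure P)
    (hM_conv : ∀ P ∈ M, ∀ Q ∈ M, ∀ α : ℝ, 0 ≤ α → α ≤ 1 →
      (ENNReal.ofReal (1 - α)) • P + (ENNReal.ofReal α) • Q ∈ M)
    (hM_equiv : ∀ P ∈ M, ∀ Q ∈ M, P ≪ Q)
    (l L : ℝ) (hl : 0 < l) (hlL : l ≤ L)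
    (hRN : ∀ P ∈ M, ∀ Q ∈ M, ∀ᵐ ω ∂Q,
      l ≤ (P.rnDeriv Q ω).toReal ∧ (P.rnDeriv Q ω).toReal ≤ L)
    (f : ℕ → Ω → ℝ)
    (hf : ∀ P ∈ M, Supermartingale f ℱ P)
    (P₁ : Measure Ω) (hP₁ : P₁ ∈ M)
    (m₀ : ℕ) (hm₀ : 1 ≤ m₀)
    (φ : Ω → ℝ)
    (hφ_meas : StronglyMeasurable[ℱ (m₀ - 1)] φ)
    (hφ_nonneg : ∀ ω, 0 ≤ φ ω)
    (hφ_pos : 0 < P₁ {ω | 0 < φ ω})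
    (hineq : ∀ᵐ ω ∂P₁, φ ω ≤ f (m₀ - 1) ω - (P₁[f m₀ | ℱ (m₀ - 1)]) ω) :
    ∀ P₂ ∈ M, ∀ α : ℝ, 0 ≤ α → α ≤ L / (1 + L) →
      ∀ᵐ ω ∂((ENNReal.ofReal (1 - α)) • P₁ + (ENNReal.ofReal α) • P₂),
        (l / (1 + L)) * φ ω ≤ f (m₀ - 1) ω -
          ((((ENNReal.ofReal (1 - α)) • P₁ + (ENNReal.ofReal α) • P₂))[f m₀ | ℱ (m₀ - 1)]) ω := by
  intro P₂ hP₂ α hα0 hα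
  have hL : 0 < L := lt_of_lt_of_le hl hlL
  have h1L : (0:ℝ) < 1 + L := by linarith
  have hα1 : α ≤ 1 := hα.trans (by rw [div_le_one h1L]; linarith)
  have h1α : (0:ℝ) ≤ 1 - α := by linarith
  set Q : Measure Ω := (ENNReal.ofReal (1 - α)) • P₁ + (ENNReal.ofReal α) • P₂ with hQdef
  have hQM : Q ∈ M := hM_conv P₁ hP₁ P₂ hP₂ α hα0 hα1
  haveI hPP₁ := hM_prob P₁ hP₁
  haveI hPP₂ := hM_prob P₂ hP₂
  haveI hPQ := hM_prob Q hQM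
  have hle : ℱ (m₀ - 1) ≤ m0 := ℱ.le _
  have hm : m₀ - 1 ≤ m₀ := Nat.sub_le _ _
  -- integrabilities
  have hfQ := hf Q hQM
  have hfP₁ := hf P₁ hP₁
  have hfP₂ := hf P₂ hP₂
  have hgap₁_int : Integrable (fun ω => f (m₀ - 1) ω - (P₁[f m₀ | ℱ (m₀ - 1)]) ω) P₁ :=
    (hfP₁.integrable _).sub integrable_condExp
  have hφ_int1 : Integrable φ P₁ := by
    refine Integrable.mono' hgap₁_int ((hφ_meas.mono hle).aestronglyMeasurable) ?_
    filter_upwards [hineq] with ω hω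
    rw [Real.norm_eq_abs, abs_of_nonneg (hφ_nonneg ω)]
    exact hω
  have hφ_int2 : Integrable φ P₂ := by
    rw [← integrable_rnDeriv_smul_iff (hM_equiv P₂ hP₂ P₁ hP₁)]
    refine Integrable.mono' (hφ_int1.const_mul L) ?_ ?_
    · exact ((Measure.measurable_rnDeriv P₂ P₁).ennreal_toReal.aestronglyMeasurable).smul
        ((hφ_meas.mono hle).aestronglyMeasurable)
    · filter_upwards [(hRN P₂ hP₂ P₁ hP₁)] with ω hω
      rw [smul_eq_mul, Real.norm_eq_abs, abs_of_nonneg (mul_nonneg (ENNReal.toReal_nonneg)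
        (hφ_nonneg ω))]
      exact mul_le_mul_of_nonneg_right hω.2 (hφ_nonneg ω)
  have hone : ENNReal.ofReal (1 - α) ≠ ∞ := ENNReal.ofReal_ne_top
  have htwo : ENNReal.ofReal α ≠ ∞ := ENNReal.ofReal_ne_top
  have hφ_intQ : Integrable φ Q := by
    rw [hQdef]
    exact (hφ_int1.smul_measure hone).add_measure (hφ_int2.smul_measure htwo)
  -- decomposition of set integrals over Q
  have hsplit : ∀ (h : Ω → ℝ), Integrable h P₁ → Integrable h P₂ →
      ∀ A : Set Ω, MeasurableSet A →
      ∫ x in A, h x ∂Q = (1 - α) * ∫ x in A, h x ∂P₁ + α * ∫ x in A, h x ∂P₂ := by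
    intro h h1 h2 A hA
    rw [hQdef]
    rw [Measure.restrict_add, Measure.restrict_smul, Measure.restrict_smul,
      integral_add_measure ((h1.restrict).smul_measure hone) ((h2.restrict).smul_measure htwo),
      integral_smul_measure, integral_smul_measure, ENNReal.toReal_ofReal h1α,
      ENNReal.toReal_ofReal hα0, smul_eq_mul, smul_eq_mul]
  -- the function to show nonnegative
  set c : ℝ := l / (1 + L) with hc
  set g : Ω → ℝ := fun ω => f (m₀ - 1) ω - (Q[f m₀ | ℱ (m₀ - 1)]) ω - c * φ ω with hg
  have hg_meas : StronglyMeasurable[ℱ (m₀ - 1)] g :=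
    ((hfQ.stronglyAdapted (m₀ - 1) : StronglyMeasurable[ℱ (m₀ - 1)] (f (m₀ - 1))).sub stronglyMeasurable_condExp).sub (hφ_meas.const_mul c)
  have hg_int : Integrable g Q :=
    ((hfQ.integrable _).sub integrable_condExp).sub (hφ_intQ.const_mul c)
  -- key set-integral inequality
  have hkey : ∀ A : Set Ω, MeasurableSet[ℱ (m₀ - 1)] A → 0 ≤ ∫ x in A, g x ∂Q := by
    intro A hA
    have hAm : MeasurableSet A := hle _ hA
    have hIQ_nonneg : 0 ≤ ∫ x in A, φ x ∂Q :=
      setIntegral_nonneg hAm fun x _ => hφ_nonneg x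
    -- ∫_A φ dP₁ ≥ l * ∫_A φ dQ
    have hP1Q : l * ∫ x in A, φ x ∂Q ≤ ∫ x in A, φ x ∂P₁ := by
      have hac : P₁ ≪ Q := hM_equiv P₁ hP₁ Q hQM
      have hrn := integral_rnDeriv_smul (f := A.indicator φ) hac
      have hfun : (fun x => (P₁.rnDeriv Q x).toReal • A.indicator φ x)
          = A.indicator (fun x => (P₁.rnDeriv Q x).toReal * φ x) := by
        ext x
        by_cases hx : x ∈ A <;>
          simp [Set.indicator_of_mem, Set.indicator_of_notMem, hx]
      rw [hfun, integral_indicator hAm, integral_indicator hAm] at hrn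
      rw [← hrn]
      have hint_rn : Integrable (fun x => (P₁.rnDeriv Q x).toReal • φ x) Q :=
        (integrable_rnDeriv_smul_iff hac).mpr hφ_int1
      calc l * ∫ x in A, φ x ∂Q = ∫ x in A, l * φ x ∂Q := by rw [integral_const_mul]
        _ ≤ ∫ x in A, (P₁.rnDeriv Q x).toReal * φ x ∂Q := by
            refine integral_mono_ae ((hφ_intQ.const_mul l).restrict)
              (by simpa [smul_eq_mul] using hint_rn.restrict) ?_
            filter_upwards [ae_restrict_of_ae (hRN P₁ hP₁ Q hQM)] with x hx
            exact mul_le_mul_of_nonneg_right hx.1 (hφ_nonneg x)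
    -- ∫_A gap dP₁ ≥ ∫_A φ dP₁
    have hD₁ : ∫ x in A, φ x ∂P₁ ≤ ∫ x in A, f (m₀ - 1) x ∂P₁ - ∫ x in A, f m₀ x ∂P₁ := by
      rw [← setIntegral_condExp hle (hfP₁.integrable m₀) hA,
        ← integral_sub ((hfP₁.integrable _).restrict) (integrable_condExp.restrict)]
      exact integral_mono_ae (hφ_int1.restrict) (hgap₁_int.restrict) (ae_restrict_of_ae hineq)
    -- ∫_A gap dP₂ ≥ 0
    have hD₂ : 0 ≤ ∫ x in A, f (m₀ - 1) x ∂P₂ - ∫ x in A, f m₀ x ∂P₂ := by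
      rw [← setIntegral_condExp hle (hfP₂.integrable m₀) hA,
        ← integral_sub ((hfP₂.integrable _).restrict) (integrable_condExp.restrict)]
      refine integral_nonneg_of_ae ?_
      filter_upwards [ae_restrict_of_ae (hfP₂.2.1 (m₀ - 1) m₀ hm)] with x hx
      simpa using hx
    -- assemble
    have hgsplit : ∫ x in A, g x ∂Q
        = (∫ x in A, f (m₀ - 1) x ∂Q - ∫ x in A, f m₀ x ∂Q) - c * ∫ x in A, φ x ∂Q := by
      have hint1 : Integrable (fun x => f (m₀ - 1) x - (Q[f m₀ | ℱ (m₀ - 1)]) x)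
          (Q.restrict A) := ((hfQ.integrable _).sub integrable_condExp).restrict
      have hint2 : Integrable (fun x => c * φ x) (Q.restrict A) :=
        (hφ_intQ.const_mul c).restrict
      simp only [hg]
      rw [integral_sub hint1 hint2,
        integral_sub ((hfQ.integrable _).restrict) (integrable_condExp.restrict),
        setIntegral_condExp hle (hfQ.integrable m₀) hA, integral_const_mul]
    rw [hgsplit, hsplit _ (hfP₁.integrable _) (hfP₂.integrable _) A hAm,
      hsplit _ (hfP₁.integrable _) (hfP₂.integrable _) A hAm]
    set I₁ := ∫ x in A, φ x ∂P₁
    set IQ := ∫ x in A, φ x ∂Q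
    set a₁ := ∫ x in A, f (m₀ - 1) x ∂P₁
    set b₁ := ∫ x in A, f m₀ x ∂P₁
    set a₂ := ∫ x in A, f (m₀ - 1) x ∂P₂
    set b₂ := ∫ x in A, f m₀ x ∂P₂
    have h1 : (1 - α) * (a₁ - b₁) ≥ (1 - α) * I₁ := by nlinarith
    have h2 : α * (a₂ - b₂) ≥ 0 := by nlinarith
    have h3 : (1 - α) * I₁ ≥ (1 - α) * (l * IQ) := by nlinarith
    have h4 : (1 - α) ≥ 1 / (1 + L) := by
      rw [ge_iff_le, div_le_iff₀ h1L]
      have : α * (1 + L) ≤ L := (le_div_iff₀ h1L).mp hα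
      linarith
    have h5 : (1 - α) * (l * IQ) ≥ (1 / (1 + L)) * (l * IQ) := by
      have : 0 ≤ l * IQ := mul_nonneg hl.le hIQ_nonneg
      nlinarith
    have hc' : c * IQ = (1 / (1 + L)) * (l * IQ) := by
      rw [hc]; field_simp
    nlinarith
  -- conclude a.e. nonnegativity of g via the trimmed measure
  have hg_trim_int : Integrable g (Q.trim hle) := hg_int.trim hle hg_meas
  have h_ae_trim : 0 ≤ᵐ[Q.trim hle] g := by
    refine ae_nonneg_of_forall_setIntegral_nonneg hg_trim_int fun s hs _ => ?_
    rw [← setIntegral_trim hle hg_meas hs]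
    exact hkey s hs
  have h_ae : 0 ≤ᵐ[Q] g := ae_of_ae_trim hle h_ae_trim
  filter_upwards [h_ae] with ω hω
  have : 0 ≤ f (m₀ - 1) ω - (Q[f m₀ | ℱ (m₀ - 1)]) ω - c * φ ω := hω
  rw [hc] at this
  linarith
end

section
/- Let P₁, …, P_n be equivalent probability measures with 0 < l ≤ dP_i/dP_j ≤ L < ∞ a.s. for all i, j, and let M = {Σ_{i=1}^n α_i P_i : α_i ≥ 0, Σ α_i = 1}. Let f = (f_m) be a supermartingale relative to M with |f_m| ≤ φ for all m, where φ ≥ 0 and E^Q φ < T < ∞ for all Q ∈ M, T independent of Q. Suppose there exist a natural number m₀ ≥ 1 and an 𝓕_{m₀−1}-measurable nonnegative random variable φ_{m₀}ⁿ with P₁(φ_{m₀}ⁿ > 0) > 0 such that f_{m₀−1} − E^{P_i}[f_{m₀} | 𝓕_{m₀−1}] ≥ φ_{m₀}ⁿ a.s. for i = 1, …, n. If g⁰ = (g_m⁰) is the maximal element of a maximal chain G̃ ⊆ G and the equalities E^{P_i}(f_∞ + g_∞⁰) = f_0 hold for i = 1, …, n, where f_∞ = lim_{m→∞} f_m and g_∞⁰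 = lim_{m→∞} g_m⁰ (these limits exist a.s.), then E^{P}[f_m + g_m⁰ | 𝓕_k] = f_k + g_k⁰ a.s. for all 0 ≤ k ≤ m and every P ∈ M. -/
open MeasureTheory Filter Set
open scoped ENNReal

variable {Ω : Type*}

/-- The convex set of measures generated by the finite family `P`. -/
def mixSet {m0 : MeasurableSpace Ω} {n : ℕ} (P : Fin (n + 1) → Measure Ω) :
    Set (Measure Ω) :=
  {Q | ∃ α : Fin (n + 1) → ℝ, (∀ i, 0 ≤ α i) ∧ (∑ i, α i = 1) ∧
    Q = ∑ i, (ENNReal.ofReal (α i)) • P i}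

/-- The set `G` of adapted non-decreasing processes `g` with `g 0 = 0` such that
`f + g` is a supermartingale relative to every measure in `M`. -/
def memG {m0 : MeasurableSpace Ω} (ℱ : Filtration ℕ m0) (M : Set (Measure Ω))
    (f g : ℕ → Ω → ℝ) : Prop :=
  Adapted ℱ g ∧ (∀ ω, g 0 ω = 0) ∧ (∀ ω, Monotone fun m => g m ω) ∧
    ∀ P ∈ M, Supermartingale (f + g) ℱ P

/-- The partial order on `G` : `g₁ ⪯ g₂` iff `g₁ m ≤ g₂ m` almost surely for every `m`. -/
def gLE {m0 : MeasurableSpace Ω} (M : Set (Measure Ω)) (g₁ g₂ : ℕ → Ω → ℝ) : Prop :=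
  ∀ P ∈ M, ∀ m : ℕ, g₁ m ≤ᵐ[P] g₂ m

/-- **Theorem 2 of the paper.**
For `M` generated by finitely many equivalent measures `P i` with bounded
Radon–Nikodym derivatives, a supermartingale `f` relative to `M` dominated by an
integrable `φ`, and a maximal element `g⁰` of a maximal chain in `G` :
if `E^{P i}(f_∞ + g⁰_∞) = f_0` for all `i` then
`E^{P}[f m + g⁰ m | ℱ k] = f k + g⁰ k` a.s. for all `k ≤ m` and all `P ∈ M`. -/
theorem stmt3 {m0 : MeasurableSpace Ω}
    (ℱ : Filtration ℕ m0) (hℱ0 : ∀ A, MeasurableSet[ℱ 0] A → A = ∅ ∨ A = Set.univ)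
    (n : ℕ) (P : Fin (n + 1) → Measure Ω)
    (hP_prob : ∀ i, IsProbabilityMeasure (P i))
    (hP_equiv : ∀ i j, P i ≪ P j)
    (l L : ℝ) (hl : 0 < l) (hlL : l ≤ L)
    (hRN : ∀ i j, ∀ᵐ ω ∂(P j),
      l ≤ ((P i).rnDeriv (P j) ω).toReal ∧ ((P i).rnDeriv (P j) ω).toReal ≤ L)
    (f : ℕ → Ω → ℝ)
    (hf : ∀ Q ∈ mixSet P, Supermartingale f ℱ Q)
    (φ : Ω → ℝ) (hφ_nonneg : ∀ ω, 0 ≤ φ ω)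
    (hbound : ∀ m, ∀ ω, |f m ω| ≤ φ ω)
    (T : ℝ)
    (hφ_int : ∀ Q ∈ mixSet P, Integrable φ Q)
    (hφT : ∀ Q ∈ mixSet P, ∫ ω, φ ω ∂Q < T)
    (m₀ : ℕ) (hm₀ : 1 ≤ m₀)
    (φm₀ : Ω → ℝ)
    (hφm₀_meas : StronglyMeasurable[ℱ (m₀ - 1)] φm₀)
    (hφm₀_nonneg : ∀ ω, 0 ≤ φm₀ ω)
    (hφm₀_pos : 0 < P 0 {ω | 0 < φm₀ ω})
    (hineq : ∀ i, ∀ᵐ ω ∂(P i), φm₀ ω ≤ f (m₀ - 1) ω - ((P i)[f m₀ | ℱ (m₀ - 1)]) ω)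
    (C : Set (ℕ → Ω → ℝ))
    (hCG : ∀ g ∈ C, memG ℱ (mixSet P) f g)
    (hC_chain : IsChain (gLE (mixSet P)) C)
    (hC_max : ∀ C' : Set (ℕ → Ω → ℝ), (∀ g ∈ C', memG ℱ (mixSet P) f g) →
      IsChain (gLE (mixSet P)) C' → C ⊆ C' → C' = C)
    (g0 : ℕ → Ω → ℝ) (hg0C : g0 ∈ C) (hg0max : ∀ g ∈ C, gLE (mixSet P) g g0)
    (fInf gInf : Ω → ℝ)
    (hfInf : ∀ i, ∀ᵐ ω ∂(P i), Tendsto (fun m => f m ω) atTop (nhds (fInf ω)))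
    (hgInf : ∀ i, ∀ᵐ ω ∂(P i), Tendsto (fun m => g0 m ω) atTop (nhds (gInf ω)))
    (heq : ∀ i, ∫ ω, (fInf ω + gInf ω) ∂(P i) = ∫ ω, f 0 ω ∂(P i)) :
    ∀ Q ∈ mixSet P, ∀ k m : ℕ, k ≤ m →
      (Q[(fun ω => f m ω + g0 m ω) | ℱ k]) =ᵐ[Q] fun ω => f k ω + g0 k ω := by

  classical
  have hPmem : ∀ i, P i ∈ mixSet P := by
    intro i
    refine ⟨fun j => if j = i then 1 else 0, ?_, ?_, ?_⟩
    · intro j; by_cases h : j = i <;> simp [h]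
    · simp
    · rw [Finset.sum_eq_single i]
      · simp
      · intro j _ hj; simp [hj]
      · simp
  obtain ⟨hg0_adapted, hg0_zero, hg0_mono, hX⟩ := hCG g0 hg0C
  set X : ℕ → Ω → ℝ := f + g0 with hXdef
  have hg0_nonneg : ∀ m ω, 0 ≤ g0 m ω := fun m ω => (hg0_zero ω) ▸ hg0_mono ω (Nat.zero_le m)
  -- Key step: for each i, the expectation of `X m` under `P i` equals that of `f 0`.
  have key : ∀ i, ∀ m, ∫ ω, X m ω ∂(P i) = ∫ ω, f 0 ω ∂(P i) := by
    intro i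
    haveI := hP_prob i
    have hXi := hX (P i) (hPmem i)
    have hfi := hf (P i) (hPmem i)
    have hintX : ∀ m, Integrable (X m) (P i) := hXi.integrable
    have hintf : ∀ m, Integrable (f m) (P i) := hfi.integrable
    have hintg : ∀ m, Integrable (g0 m) (P i) := by
      intro m
      have hgm : g0 m = X m - f m := by funext ω; simp [hXdef]
      rw [hgm]; exact (hintX m).sub (hintf m)
    have hφint := hφ_int (P i) (hPmem i)
    have hφTi := hφT (P i) (hPmem i)
    -- antitonicity of m ↦ ∫ X m
    have hanti : ∀ ⦃k m : ℕ⦄, k ≤ m → ∫ ω, X m ω ∂(P i) ≤ ∫ ω, X k ω ∂(P i) := by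
      intro k m hkm
      have h1 := hXi.2.1 k m hkm
      have h2 : ∫ ω, ((P i)[X m | ℱ k]) ω ∂(P i) = ∫ ω, X m ω ∂(P i) :=
        integral_condExp (ℱ.le k)
      calc ∫ ω, X m ω ∂(P i) = ∫ ω, ((P i)[X m | ℱ k]) ω ∂(P i) := h2.symm
        _ ≤ ∫ ω, X k ω ∂(P i) := integral_mono_ae integrable_condExp (hintX k) h1
    have hX0int : ∫ ω, X 0 ω ∂(P i) = ∫ ω, f 0 ω ∂(P i) :=
      integral_congr_ae (ae_of_all _ fun ω => by simp [hXdef, hg0_zero ω])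
    -- convergence of ∫ f m to ∫ fInf
    have hfconv : Tendsto (fun m => ∫ ω, f m ω ∂(P i)) atTop (nhds (∫ ω, fInf ω ∂(P i))) :=
      tendsto_integral_of_dominated_convergence φ
        (fun m => (hintf m).aestronglyMeasurable) hφint
        (fun m => ae_of_all _ fun ω => by rw [Real.norm_eq_abs]; exact hbound m ω)
        (hfInf i)
    have hfInf_meas : AEStronglyMeasurable fInf (P i) :=
      aestronglyMeasurable_of_tendsto_ae atTop (fun m => (hintf m).aestronglyMeasurable)
        (hfInf i)
    have hfInf_int : Integrable fInf (P i) := by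
      refine Integrable.mono' hφint hfInf_meas ((hfInf i).mono fun ω hω => ?_)
      rw [Real.norm_eq_abs]
      exact le_of_tendsto' hω.abs fun m => hbound m ω
    -- bound for the integrals of f m
    have hfm_bound : ∀ m, |∫ ω, f m ω ∂(P i)| ≤ ∫ ω, φ ω ∂(P i) := by
      intro m
      calc |∫ ω, f m ω ∂(P i)| ≤ ∫ ω, |f m ω| ∂(P i) := by
            simpa [Real.norm_eq_abs] using norm_integral_le_integral_norm (μ := P i) (f m)
        _ ≤ ∫ ω, φ ω ∂(P i) := integral_mono (hintf m).abs hφint fun ω => hbound m ω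
    -- the integrals of g0 m are monotone and bounded
    have hgmono : Monotone fun m => ∫ ω, g0 m ω ∂(P i) := fun a b hab =>
      integral_mono (hintg a) (hintg b) fun ω => hg0_mono ω hab
    have hXadd : ∀ m, ∫ ω, X m ω ∂(P i) = (∫ ω, f m ω ∂(P i)) + ∫ ω, g0 m ω ∂(P i) := by
      intro m
      have : ∫ ω, X m ω ∂(P i) = ∫ ω, (f m ω + g0 m ω) ∂(P i) := rfl
      rw [this, integral_add (hintf m) (hintg m)]
    have hgbdd : BddAbove (Set.range fun m => ∫ ω, g0 m ω ∂(P i)) := by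
      refine ⟨(∫ ω, f 0 ω ∂(P i)) + T, ?_⟩
      rintro _ ⟨m, rfl⟩
      have h1 : ∫ ω, X m ω ∂(P i) ≤ ∫ ω, f 0 ω ∂(P i) := hX0int ▸ hanti (Nat.zero_le m)
      have h2 := hXadd m
      have h3 := hfm_bound m
      have h4 := (abs_le.1 h3).1
      linarith
    set S : ℝ := ⨆ m, ∫ ω, g0 m ω ∂(P i) with hSdef
    have hgS : Tendsto (fun m => ∫ ω, g0 m ω ∂(P i)) atTop (nhds S) :=
      tendsto_atTop_ciSup hgmono hgbdd
    have hg_le_S : ∀ m, ∫ ω, g0 m ω ∂(P i) ≤ S := fun m => le_ciSup hgbdd m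
    have hg0_zero_int : ∫ ω, g0 0 ω ∂(P i) = 0 := by
      have : (fun ω => g0 0 ω) = fun _ => (0 : ℝ) := funext hg0_zero
      rw [this, integral_const]; simp
    have hS_nonneg : (0 : ℝ) ≤ S := hg0_zero_int ▸ hg_le_S 0
    -- Fatou: gInf is integrable and ∫ gInf ≤ S
    have hgInf_nonneg : 0 ≤ᵐ[P i] gInf :=
      (hgInf i).mono fun ω hω => ge_of_tendsto' hω fun m => hg0_nonneg m ω
    have hgInf_meas : AEStronglyMeasurable gInf (P i) :=
      aestronglyMeasurable_of_tendsto_ae atTop (fun m => (hintg m).aestronglyMeasurable)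
        (hgInf i)
    have hlin : ∫⁻ ω, ENNReal.ofReal (gInf ω) ∂(P i) ≤ ENNReal.ofReal S := by
      have h1 : ∫⁻ ω, ENNReal.ofReal (gInf ω) ∂(P i)
          = ∫⁻ ω, liminf (fun m => ENNReal.ofReal (g0 m ω)) atTop ∂(P i) := by
        refine lintegral_congr_ae ((hgInf i).mono fun ω hω => ?_)
        exact ((ENNReal.tendsto_ofReal hω).liminf_eq).symm
      have h2 := lintegral_liminf_le' (μ := P i) (u := atTop)
        (fun m => (ENNReal.measurable_ofReal.comp_aemeasurable (hintg m).aemeasurable))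
      have h3 : ∀ m, ∫⁻ ω, ENNReal.ofReal (g0 m ω) ∂(P i)
          = ENNReal.ofReal (∫ ω, g0 m ω ∂(P i)) := fun m =>
        (ofReal_integral_eq_lintegral_ofReal (hintg m) (ae_of_all _ (hg0_nonneg m))).symm
      have h4 : liminf (fun m => ∫⁻ ω, ENNReal.ofReal (g0 m ω) ∂(P i)) atTop
          ≤ ENNReal.ofReal S := by
        have h5 : ∀ m, ∫⁻ ω, ENNReal.ofReal (g0 m ω) ∂(P i) ≤ ENNReal.ofReal S := fun m => by
          rw [h3 m]; exact ENNReal.ofReal_le_ofReal (hg_le_S m)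
        calc liminf (fun m => ∫⁻ ω, ENNReal.ofReal (g0 m ω) ∂(P i)) atTop
            ≤ liminf (fun _ : ℕ => ENNReal.ofReal S) atTop :=
              Filter.liminf_le_liminf (Filter.Eventually.of_forall h5)
          _ = ENNReal.ofReal S := Filter.liminf_const _
      calc ∫⁻ ω, ENNReal.ofReal (gInf ω) ∂(P i)
          = ∫⁻ ω, liminf (fun m => ENNReal.ofReal (g0 m ω)) atTop ∂(P i) := h1
        _ ≤ liminf (fun m => ∫⁻ ω, ENNReal.ofReal (g0 m ω) ∂(P i)) atTop := h2
        _ ≤ ENNReal.ofReal S := h4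
    have hgInf_int : Integrable gInf (P i) := by
      refine ⟨hgInf_meas, ?_⟩
      rw [hasFiniteIntegral_iff_norm]
      have h6 : ∫⁻ ω, ENNReal.ofReal ‖gInf ω‖ ∂(P i)
          = ∫⁻ ω, ENNReal.ofReal (gInf ω) ∂(P i) :=
        lintegral_congr_ae (hgInf_nonneg.mono fun ω hω => by
          show ENNReal.ofReal ‖gInf ω‖ = ENNReal.ofReal (gInf ω)
          rw [Real.norm_eq_abs, abs_of_nonneg hω])
      rw [h6]
      exact lt_of_le_of_lt hlin ENNReal.ofReal_lt_top
    have hgInf_le_S : ∫ ω, gInf ω ∂(P i) ≤ S := by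
      rw [integral_eq_lintegral_of_nonneg_ae hgInf_nonneg hgInf_meas]
      calc (∫⁻ ω, ENNReal.ofReal (gInf ω) ∂(P i)).toReal
          ≤ (ENNReal.ofReal S).toReal := ENNReal.toReal_mono ENNReal.ofReal_ne_top hlin
        _ = S := ENNReal.toReal_ofReal hS_nonneg
    -- limit of ∫ X m is ∫ fInf + S
    have hXconv : Tendsto (fun m => ∫ ω, X m ω ∂(P i)) atTop
        (nhds ((∫ ω, fInf ω ∂(P i)) + S)) := by
      have h7 : (fun m => ∫ ω, X m ω ∂(P i))
          = fun m => (∫ ω, f m ω ∂(P i)) + ∫ ω, g0 m ω ∂(P i) := funext hXadd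
      rw [h7]; exact hfconv.add hgS
    intro m
    refine le_antisymm (hX0int ▸ hanti (Nat.zero_le m)) ?_
    have h8 : (∫ ω, fInf ω ∂(P i)) + S ≤ ∫ ω, X m ω ∂(P i) :=
      le_of_tendsto hXconv (eventually_atTop.2 ⟨m, fun k hk => hanti hk⟩)
    have h9 : ∫ ω, f 0 ω ∂(P i) = (∫ ω, fInf ω ∂(P i)) + ∫ ω, gInf ω ∂(P i) := by
      rw [← heq i, integral_add hfInf_int hgInf_int]
    linarith
  -- conclusion for arbitrary Q in the mixture set
  intro Q hQ k m hkm
  obtain ⟨α, hα0, hα1, hQeq⟩ := hQ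
  haveI hQprob : IsProbabilityMeasure Q := by
    constructor
    rw [hQeq, Measure.finset_sum_apply]
    have : ∀ j ∈ Finset.univ, (ENNReal.ofReal (α j) • P j) Set.univ = ENNReal.ofReal (α j) := by
      intro j _
      haveI := hP_prob j
      rw [Measure.smul_apply, measure_univ, smul_eq_mul, mul_one]
    rw [Finset.sum_congr rfl this, ← ENNReal.ofReal_sum_of_nonneg fun j _ => hα0 j, hα1,
      ENNReal.ofReal_one]
  have hXQ := hX Q ⟨α, hα0, hα1, hQeq⟩
  have hintXQ : ∀ m, Integrable (X m) Q := hXQ.integrable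
  have hsum : ∀ F : Ω → ℝ, (∀ j, Integrable F (P j)) →
      ∫ ω, F ω ∂Q = ∑ j, α j * ∫ ω, F ω ∂(P j) := by
    intro F hF
    rw [hQeq, integral_finset_sum_measure fun j _ => (hF j).smul_measure ENNReal.ofReal_ne_top]
    refine Finset.sum_congr rfl fun j _ => ?_
    rw [integral_smul_measure, ENNReal.toReal_ofReal (hα0 j), smul_eq_mul]
  have hQkey : ∀ m, ∫ ω, X m ω ∂Q = ∫ ω, f 0 ω ∂Q := by
    intro m
    rw [hsum (X m) fun j => (hX (P j) (hPmem j)).integrable m,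
      hsum (f 0) fun j => (hf (P j) (hPmem j)).integrable 0]
    exact Finset.sum_congr rfl fun j _ => by rw [key j m]
  have h1 : Q[X m | ℱ k] ≤ᵐ[Q] X k := hXQ.2.1 k m hkm
  have h2 : ∫ ω, (Q[X m | ℱ k]) ω ∂Q = ∫ ω, X m ω ∂Q := integral_condExp (ℱ.le k)
  have h3 : ∫ ω, (X k ω - (Q[X m | ℱ k]) ω) ∂Q = 0 := by
    rw [integral_sub (hintXQ k) integrable_condExp, h2, hQkey m, hQkey k]; ring
  have h4 : (fun ω => X k ω - (Q[X m | ℱ k]) ω) =ᵐ[Q] 0 :=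
    (integral_eq_zero_iff_of_nonneg_ae (h1.mono fun ω hω => sub_nonneg.2 hω)
      ((hintXQ k).sub integrable_condExp)).1 h3
  have h5 : Q[X m | ℱ k] =ᵐ[Q] X k := h4.mono fun ω hω => by
    have : X k ω - (Q[X m | ℱ k]) ω = 0 := hω
    linarith [this]
  exact h5
end

section
/- Let f = (f_m) be a supermartingale relative to a convex set M of mutually equivalent probability measures such that |f_m| ≤ φ for all m, where φ ≥ 0 and E^Q φ < T < ∞ for all Q ∈ M, T independent of Q. Then f is regular — i.e., there exist a martingale (M̄_m) relative to M and a non-decreasing adapted process (g_m) with g_0 = 0 such that f_m = M̄_m − g_m for all m — if and only if there exists an adapted nonnegative random process ḡ⁰ = (ḡ⁰_m) with ḡ⁰_0 = 0 and E^P ḡ⁰_m < ∞ for all m ≥ 1 and P ∈ M, such that E^P[f_{m−1} − f_m | 𝓕_{m−1}] = E^P[ḡ⁰_m | 𝓕_{m−1}] a.s. for all m ≥ 1 and all P ∈ M. -/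
open MeasureTheory Filter Set
open scoped ENNReal

/-- **Theorem `reww1` of the paper.**
Let `f` be a supermartingale relative to a convex set `M` of mutually equivalent
probability measures, dominated in absolute value by a `φ` with `E^Q φ < T` for all
`Q ∈ M`.  Then `f` is regular — i.e. `f m = M̄ m - g m` with `M̄` a martingale
relative to `M` and `g` adapted non-decreasing, `g 0 = 0` — if and only if there is
an adapted nonnegative process `ḡ⁰` with `ḡ⁰ 0 = 0`, `E^P ḡ⁰ m < ∞`, such that
`E^P[f (m-1) - f m | ℱ (m-1)] = E^P[ḡ⁰ m | ℱ (m-1)]` a.s. for all `m ≥ 1`, `P ∈ M`. -/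
theorem stmt4 {Ω : Type*} {m0 : MeasurableSpace Ω}
    (ℱ : Filtration ℕ m0) (hℱ0 : ∀ A, MeasurableSet[ℱ 0] A → A = ∅ ∨ A = Set.univ)
    (M : Set (Measure Ω)) (hMne : M.Nonempty)
    (hM_prob : ∀ P ∈ M, IsProbabilityMeasure P)
    (hM_conv : ∀ P ∈ M, ∀ Q ∈ M, ∀ α : ℝ, 0 ≤ α → α ≤ 1 →
      (ENNReal.ofReal (1 - α)) • P + (ENNReal.ofReal α) • Q ∈ M)
    (hM_equiv : ∀ P ∈ M, ∀ Q ∈ M, P ≪ Q)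
    (f : ℕ → Ω → ℝ)
    (hf : ∀ P ∈ M, Supermartingale f ℱ P)
    (φ : Ω → ℝ) (hφ_nonneg : ∀ ω, 0 ≤ φ ω)
    (hbound : ∀ m, ∀ ω, |f m ω| ≤ φ ω)
    (T : ℝ)
    (hφ_int : ∀ Q ∈ M, Integrable φ Q)
    (hφT : ∀ Q ∈ M, ∫ ω, φ ω ∂Q < T) :
    (∃ (Mbar g : ℕ → Ω → ℝ),
        (∀ P ∈ M, Martingale Mbar ℱ P) ∧
        Adapted ℱ g ∧ (∀ ω, g 0 ω = 0) ∧ (∀ ω, Monotone fun m => g m ω) ∧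
        ∀ m ω, f m ω = Mbar m ω - g m ω) ↔
    (∃ gbar : ℕ → Ω → ℝ,
        Adapted ℱ gbar ∧ (∀ ω, gbar 0 ω = 0) ∧ (∀ m ω, 0 ≤ gbar m ω) ∧
        (∀ P ∈ M, ∀ m : ℕ, Integrable (gbar (m + 1)) P) ∧
        ∀ P ∈ M, ∀ m : ℕ,
          (P[(f m - f (m + 1)) | ℱ m]) =ᵐ[P] (P[gbar (m + 1) | ℱ m])) := by
  constructor
  · rintro ⟨Mbar, g, hMbar, hg_adapt, hg0, hg_mono, hfdec⟩
    refine ⟨fun m ω => g m ω - g (m - 1) ω, ?_, ?_, ?_, ?_, ?_⟩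
    · intro m
      exact (hg_adapt m).sub ((hg_adapt (m - 1)).mono (ℱ.mono (Nat.sub_le m 1)) le_rfl)
    · intro ω; simp
    · intro m ω
      exact sub_nonneg.2 (hg_mono ω (Nat.sub_le m 1))
    · -- integrability of increments
      intro P hP m
      haveI := hM_prob P hP
      have hgint : ∀ k, Integrable (g k) P := by
        intro k
        have : g k = fun ω => Mbar k ω - f k ω := by
          funext ω; have := hfdec k ω; linarith
        rw [this]
        exact ((hMbar P hP).integrable k).sub ((hf P hP).integrable k)
      simpa [Pi.sub_def] using (hgint (m + 1)).sub (hgint m)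
    · intro P hP m
      haveI := hM_prob P hP
      have hgint : ∀ k, Integrable (g k) P := by
        intro k
        have : g k = fun ω => Mbar k ω - f k ω := by
          funext ω; have := hfdec k ω; linarith
        rw [this]
        exact ((hMbar P hP).integrable k).sub ((hf P hP).integrable k)
      have hkey : (f m - f (m + 1)) =
          (fun ω => g (m + 1) ω - g ((m + 1) - 1) ω) + (Mbar m - Mbar (m + 1)) := by
        funext ω
        have h1 := hfdec m ω; have h2 := hfdec (m + 1) ω
        simp only [Pi.add_apply, Pi.sub_apply]
        simp only [Nat.add_sub_cancel]
        linarith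
      rw [hkey]
      have hint1 : Integrable (fun ω => g (m + 1) ω - g ((m + 1) - 1) ω) P := by
        simpa [Pi.sub_def] using (hgint (m + 1)).sub (hgint m)
      have hint2 : Integrable (Mbar m - Mbar (m + 1)) P :=
        ((hMbar P hP).integrable m).sub ((hMbar P hP).integrable (m + 1))
      refine (condExp_add hint1 hint2 (ℱ m)).trans ?_
      have hz : (P[(Mbar m - Mbar (m + 1)) | ℱ m]) =ᵐ[P] 0 := by
        have h1 : (P[Mbar m | ℱ m]) = Mbar m :=
          condExp_of_stronglyMeasurable (ℱ.le m) ((hMbar P hP).stronglyAdapted m)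
            ((hMbar P hP).integrable m)
        have h2 : (P[Mbar (m + 1) | ℱ m]) =ᵐ[P] Mbar m :=
          (hMbar P hP).condExp_ae_eq (Nat.le_succ m)
        refine (condExp_sub ((hMbar P hP).integrable m)
          ((hMbar P hP).integrable (m + 1)) (ℱ m)).trans ?_
        filter_upwards [h2] with ω h2ω
        simp [h1, h2ω]
      filter_upwards [hz] with ω hω
      simp [hω]
  · rintro ⟨gbar, hgbar_adapt, hgbar0, hgbar_nonneg, hgbar_int, hcond⟩
    refine ⟨fun m ω => f m ω + ∑ k ∈ Finset.range m, gbar (k + 1) ω,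
      fun m ω => ∑ k ∈ Finset.range m, gbar (k + 1) ω, ?_, ?_, ?_, ?_, ?_⟩
    · intro P hP
      haveI := hM_prob P hP
      have hg_adapt : Adapted ℱ fun m ω => ∑ k ∈ Finset.range m, gbar (k + 1) ω := by
        intro m
        exact Finset.measurable_sum (Finset.range m) fun k hk =>
          (hgbar_adapt (k + 1)).mono (ℱ.mono (Finset.mem_range.1 hk)) le_rfl
      have hg_int : ∀ m, Integrable (fun ω => ∑ k ∈ Finset.range m, gbar (k + 1) ω) P :=
        fun m => integrable_finset_sum (Finset.range m) fun k _ => hgbar_int P hP k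
      refine martingale_nat (fun m => ((hf P hP).stronglyAdapted m).add (hg_adapt m).stronglyMeasurable)
        (fun m => ((hf P hP).integrable m).add (hg_int m)) ?_
      intro n
      have heq : (fun ω => f (n + 1) ω + ∑ k ∈ Finset.range (n + 1), gbar (k + 1) ω) =
          (f (n + 1) + gbar (n + 1)) + fun ω => ∑ k ∈ Finset.range n, gbar (k + 1) ω := by
        funext ω
        simp [Finset.sum_range_succ]
        ring
      rw [heq]
      have h1 : (P[(f (n + 1) + gbar (n + 1) + fun ω =>
            ∑ k ∈ Finset.range n, gbar (k + 1) ω) | ℱ n]) =ᵐ[P]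
          (P[(f (n + 1) + gbar (n + 1)) | ℱ n]) +
            fun ω => ∑ k ∈ Finset.range n, gbar (k + 1) ω := by
        have hcs : (P[(fun ω => ∑ k ∈ Finset.range n, gbar (k + 1) ω) | ℱ n]) =
            fun ω => ∑ k ∈ Finset.range n, gbar (k + 1) ω :=
          condExp_of_stronglyMeasurable (ℱ.le n) (hg_adapt n).stronglyMeasurable (hg_int n)
        refine (condExp_add (((hf P hP).integrable (n + 1)).add (hgbar_int P hP n))
          (hg_int n) (ℱ n)).trans ?_
        rw [hcs]
      have h2 : (P[(f (n + 1) + gbar (n + 1)) | ℱ n]) =ᵐ[P] f n := by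
        have ha : (P[(f (n + 1) + gbar (n + 1)) | ℱ n]) =ᵐ[P]
            (P[f (n + 1) | ℱ n]) + (P[gbar (n + 1) | ℱ n]) :=
          condExp_add ((hf P hP).integrable (n + 1)) (hgbar_int P hP n) (ℱ n)
        have hb : (P[(f n - f (n + 1)) | ℱ n]) =ᵐ[P]
            (P[f n | ℱ n]) - (P[f (n + 1) | ℱ n]) :=
          condExp_sub ((hf P hP).integrable n) ((hf P hP).integrable (n + 1)) (ℱ n)
        have hc : (P[f n | ℱ n]) = f n :=
          condExp_of_stronglyMeasurable (ℱ.le n) ((hf P hP).stronglyAdapted n)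
            ((hf P hP).integrable n)
        filter_upwards [ha, hb, hcond P hP n] with ω haω hbω hcω
        have : (P[gbar (n + 1) | ℱ n]) ω = f n ω - (P[f (n + 1) | ℱ n]) ω := by
          rw [← hcω, hbω]
          simp [hc]
        rw [haω, Pi.add_apply, this]
        ring
      filter_upwards [h1, h2] with ω h1ω h2ω
      rw [h1ω, Pi.add_apply, h2ω]
    · intro m
      exact Finset.measurable_sum (Finset.range m) fun k hk =>
        (hgbar_adapt (k + 1)).mono (ℱ.mono (Finset.mem_range.1 hk)) le_rfl
    · intro ω; simp
    · intro ω
      exact monotone_nat_of_le_succ fun n => by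
        simp [Finset.sum_range_succ, hgbar_nonneg (n + 1) ω]
    · intro m ω; ring
end

section
/- Let f = (f_m) be a supermartingale relative to a convex set M of mutually equivalent probability measures such that |f_m| ≤ φ for all m, where φ ≥ 0 and E^Q φ < T < ∞ for all Q ∈ M, T independent of Q. Then f is regular — i.e., there exists a non-decreasing adapted process g = (g_m) with g_0 = 0 such that (f_m + g_m) is a martingale relative to M — if and only if there exists a non-decreasing adapted process g = (g_m) with g_0 = 0 such that for every finite set of measures P₁, …, P_n ∈ M there exist adapted processes Ψʲ = (Ψʲ_m) with Ψʲ_0 = 0, E^{P_j}|Ψʲ_m| < ∞ and E^{P_j}[Ψʲ_m | 𝓕_{m−1}] = 0 for all m ≥ 1, such that g_m − g_{m−1} = f_{m−1} − E^{P_j}[f_m | 𝓕_{m−1}] + Ψʲ_m a.s. for all m ≥ 1 and j = 1, …, n. -/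
open MeasureTheory Filter Set
open scoped ENNReal

/-- **Theorem `kj1` of the paper.**
Let `f` be a supermartingale relative to a convex set `M` of mutually equivalent
probability measures, dominated in absolute value by an integrable `φ` with
`E^Q φ < T` for all `Q ∈ M`.  Then `f` is regular — i.e. `f + g` is a martingale
relative to `M` for some adapted non-decreasing `g` with `g 0 = 0` — if and only if
there is an adapted non-decreasing `g` with `g 0 = 0` such that for every finite
family of measures `P j ∈ M` there are adapted processes `Ψ j` with `Ψ j 0 = 0`,
`E^{P j}|Ψ j m| < ∞`, `E^{P j}[Ψ j m | ℱ (m-1)] = 0`, and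
`g m - g (m-1) = f (m-1) - E^{P j}[f m | ℱ (m-1)] + Ψ j m` a.s. for all `m ≥ 1`. -/
theorem stmt5 {Ω : Type*} {m0 : MeasurableSpace Ω}
    (ℱ : Filtration ℕ m0) (hℱ0 : ∀ A, MeasurableSet[ℱ 0] A → A = ∅ ∨ A = Set.univ)
    (M : Set (Measure Ω)) (hMne : M.Nonempty)
    (hM_prob : ∀ P ∈ M, IsProbabilityMeasure P)
    (hM_conv : ∀ P ∈ M, ∀ Q ∈ M, ∀ α : ℝ, 0 ≤ α → α ≤ 1 →
      (ENNReal.ofReal (1 - α)) • P + (ENNReal.ofReal α) • Q ∈ M)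
    (hM_equiv : ∀ P ∈ M, ∀ Q ∈ M, P ≪ Q)
    (f : ℕ → Ω → ℝ)
    (hf : ∀ P ∈ M, Supermartingale f ℱ P)
    (φ : Ω → ℝ) (hφ_nonneg : ∀ ω, 0 ≤ φ ω)
    (hbound : ∀ m, ∀ ω, |f m ω| ≤ φ ω)
    (T : ℝ)
    (hφ_int : ∀ Q ∈ M, Integrable φ Q)
    (hφT : ∀ Q ∈ M, ∫ ω, φ ω ∂Q < T) :
    (∃ g : ℕ → Ω → ℝ,
        Adapted ℱ g ∧ (∀ ω, g 0 ω = 0) ∧ (∀ ω, Monotone fun m => g m ω) ∧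
        ∀ P ∈ M, Martingale (f + g) ℱ P) ↔
    (∃ g : ℕ → Ω → ℝ,
        Adapted ℱ g ∧ (∀ ω, g 0 ω = 0) ∧ (∀ ω, Monotone fun m => g m ω) ∧
        ∀ (n : ℕ) (P : Fin (n + 1) → Measure Ω), (∀ j, P j ∈ M) →
          ∃ Ψ : Fin (n + 1) → ℕ → Ω → ℝ,
            ∀ j, Adapted ℱ (Ψ j) ∧ (∀ ω, Ψ j 0 ω = 0) ∧
              (∀ m : ℕ, Integrable (Ψ j (m + 1)) (P j)) ∧
              (∀ m : ℕ, ((P j)[Ψ j (m + 1) | ℱ m]) =ᵐ[P j] (0 : Ω → ℝ)) ∧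
              (∀ m : ℕ, ∀ᵐ ω ∂(P j),
                g (m + 1) ω - g m ω =
                  f m ω - ((P j)[f (m + 1) | ℱ m]) ω + Ψ j (m + 1) ω)) := by
  constructor
  · rintro ⟨g, hadp, hg0, hmono, hmart⟩
    refine ⟨g, hadp, hg0, hmono, ?_⟩
    intro n P hP
    refine ⟨fun j m => Nat.rec (fun _ => 0)
      (fun m _ ω => g (m + 1) ω - g m ω - f m ω + ((P j)[f (m + 1)|ℱ m]) ω) m, ?_⟩
    intro j
    haveI := hM_prob (P j) (hP j)
    have hfP := hf (P j) (hP j)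
    have hmartP := hmart (P j) (hP j)
    have hgint : ∀ m, Integrable (g m) (P j) := fun m =>
      ((hmartP.integrable m).sub (hfP.integrable m)).congr
        (by filter_upwards with ω; simp [Pi.add_apply])
    refine ⟨?_, fun ω => rfl, ?_, ?_, ?_⟩
    · intro m
      match m with
      | 0 => exact measurable_const
      | m + 1 =>
        exact (((((hadp (m + 1)).stronglyMeasurable.sub ((hadp m).stronglyMeasurable.mono (ℱ.mono (Nat.le_succ m)))).sub
          ((hfP.stronglyAdapted m).mono (ℱ.mono (Nat.le_succ m)))).add
          (stronglyMeasurable_condExp.mono (ℱ.mono (Nat.le_succ m))))).measurable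
    · intro m
      exact (((hgint (m + 1)).sub (hgint m)).sub (hfP.integrable m)).add integrable_condExp
    · intro m
      show (P j)[(fun ω => g (m + 1) ω - g m ω - f m ω + ((P j)[f (m + 1)|ℱ m]) ω)|ℱ m]
          =ᵐ[P j] (0 : Ω → ℝ)
      set c := (P j)[f (m + 1)|ℱ m] with hc
      have hhsm : StronglyMeasurable[ℱ m] (g m + f m - c) :=
        ((hadp m).stronglyMeasurable.add (hfP.stronglyAdapted m)).sub stronglyMeasurable_condExp
      have hhint : Integrable (g m + f m - c) (P j) :=
        ((hgint m).add (hfP.integrable m)).sub integrable_condExp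
      have heq : (fun ω => g (m + 1) ω - g m ω - f m ω + c ω)
          = g (m + 1) - (g m + f m - c) := by
        funext ω; simp [Pi.add_apply, Pi.sub_apply]; ring
      rw [heq]
      have h1 : (P j)[g (m + 1) - (g m + f m - c)|ℱ m]
          =ᵐ[P j] (P j)[g (m + 1)|ℱ m] - (P j)[g m + f m - c|ℱ m] :=
        condExp_sub (hgint (m + 1)) hhint _
      rw [condExp_of_stronglyMeasurable (ℱ.le m) hhsm hhint] at h1
      have hg1 : g (m + 1) = (f + g) (m + 1) - f (m + 1) := by
        funext ω; simp [Pi.add_apply]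
      have h2 : (P j)[g (m + 1)|ℱ m]
          =ᵐ[P j] (P j)[(f + g) (m + 1)|ℱ m] - c := by
        rw [hg1]
        exact condExp_sub (hmartP.integrable (m + 1)) (hfP.integrable (m + 1)) _
      have h3 := hmartP.condExp_ae_eq (Nat.le_succ m)
      filter_upwards [h1, h2, h3] with ω h1 h2 h3
      simp only [Pi.sub_apply, Pi.add_apply, Pi.zero_apply] at *
      rw [h1, h2, h3]; ring
    · intro m
      filter_upwards with ω
      show g (m + 1) ω - g m ω = f m ω - _ + (g (m + 1) ω - g m ω - f m ω + _)
      ring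
  · rintro ⟨g, hadp, hg0, hmono, hprop⟩
    refine ⟨g, hadp, hg0, hmono, ?_⟩
    intro Q hQ
    haveI := hM_prob Q hQ
    have hfQ := hf Q hQ
    obtain ⟨Ψ, hΨ⟩ := hprop 0 (fun _ => Q) (fun _ => hQ)
    obtain ⟨hΨadp, hΨ0, hΨint, hΨce, heqn⟩ := hΨ 0
    -- integrability of g
    have hgint : ∀ m, Integrable (g m) Q := by
      intro m
      induction m with
      | zero =>
        exact (integrable_const (0 : ℝ)).congr
          (by filter_upwards with ω; exact (hg0 ω).symm)
      | succ m ih =>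
        have : Integrable (fun ω => g m ω + (f m ω - (Q[f (m + 1)|ℱ m]) ω
            + Ψ 0 (m + 1) ω)) Q :=
          ih.add (((hfQ.integrable m).sub integrable_condExp).add (hΨint m))
        refine this.congr ?_
        filter_upwards [heqn m] with ω h
        rw [← h]; ring
    have hint : ∀ m, Integrable ((f + g) m) Q := fun m =>
      (hfQ.integrable m).add (hgint m)
    refine martingale_nat (fun m => (hfQ.stronglyAdapted m).add (hadp m).stronglyMeasurable) hint ?_
    intro m
    have hgstep : g (m + 1) =ᵐ[Q] fun ω => g m ω + f m ω - (Q[f (m + 1)|ℱ m]) ω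
        + Ψ 0 (m + 1) ω := by
      filter_upwards [heqn m] with ω h
      linarith
    have hcg : Q[g (m + 1)|ℱ m] =ᵐ[Q] Q[fun ω => (g m ω + f m ω
        - (Q[f (m + 1)|ℱ m]) ω) + Ψ 0 (m + 1) ω|ℱ m] := by
      refine condExp_congr_ae (hgstep.trans ?_)
      filter_upwards with ω; ring
    have hhsm : StronglyMeasurable[ℱ m]
        (g m + f m - Q[f (m + 1)|ℱ m]) :=
      ((hadp m).stronglyMeasurable.add (hfQ.stronglyAdapted m)).sub stronglyMeasurable_condExp
    have hhint : Integrable (g m + f m - Q[f (m + 1)|ℱ m]) Q :=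
      ((hgint m).add (hfQ.integrable m)).sub integrable_condExp
    have hca : Q[fun ω => (g m ω + f m ω - (Q[f (m + 1)|ℱ m]) ω)
        + Ψ 0 (m + 1) ω|ℱ m]
        =ᵐ[Q] Q[g m + f m - Q[f (m + 1)|ℱ m]|ℱ m] + Q[Ψ 0 (m + 1)|ℱ m] :=
      condExp_add hhint (hΨint m) _
    have hcsum : Q[(f + g) (m + 1)|ℱ m]
        =ᵐ[Q] Q[f (m + 1)|ℱ m] + Q[g (m + 1)|ℱ m] := by
      have : (f + g) (m + 1) = f (m + 1) + g (m + 1) := rfl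
      rw [this]
      exact condExp_add (hfQ.integrable (m + 1)) (hgint (m + 1)) _
    rw [condExp_of_stronglyMeasurable (ℱ.le m) hhsm hhint] at hca
    filter_upwards [hcg, hca, hΨce m, hcsum] with ω hcg hca hz hcsum
    simp only [Pi.add_apply, Pi.sub_apply, Pi.zero_apply] at *
    rw [hcsum, hcg, hca, hz]; ring
end

section
/- Let the filtration (𝓕_n)_{n≥1} on (Ω, 𝓕) satisfy condition A and let the mutually equivalent probability measures P₁, …, P_k satisfy condition B with distinguished index i₀. Then for every l ∈ {1, …, k}, every i ∈ {1, …, k} and every n ≥ 1, almost surely: (dP_i/dP_l) / E^{P_l}[dP_i/dP_l | 𝓕_n] ≤ (dP_{i₀}/dP_l) / E^{P_l}[dP_{i₀}/dP_l | 𝓕_n]. -/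
open MeasureTheory Filter Set
open scoped ENNReal Topology

lemma unions_of_atoms {Ω : Type*} (B : ℕ → Set Ω)
    (hd : Pairwise (Function.onFun Disjoint B)) (hc : (⋃ s, B s) = Set.univ)
    {S : Set Ω} (hS : MeasurableSet[MeasurableSpace.generateFrom (Set.range B)] S) :
    ∃ T : Set ℕ, S = ⋃ s ∈ T, B s := by
  refine MeasurableSpace.generateFrom_induction (Set.range B)
    (fun S _ => ∃ T : Set ℕ, S = ⋃ s ∈ T, B s) ?_ ⟨∅, by simp⟩ ?_ ?_ S hS
  · rintro t ⟨s, rfl⟩ _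
    exact ⟨{s}, by simp⟩
  · rintro t ht ⟨T, rfl⟩
    refine ⟨Tᶜ, ?_⟩
    ext x
    rw [Set.mem_compl_iff]
    constructor
    · intro hx
      have hx2 : x ∈ ⋃ s, B s := hc ▸ Set.mem_univ x
      obtain ⟨s, hs⟩ := Set.mem_iUnion.mp hx2
      exact Set.mem_biUnion (fun hsT => hx (Set.mem_biUnion hsT hs)) hs
    · intro hx hx'
      obtain ⟨s, hsT, hxs⟩ := Set.mem_iUnion₂.mp hx
      obtain ⟨s', hs'T, hxs'⟩ := Set.mem_iUnion₂.mp hx'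
      rcases eq_or_ne s s' with rfl | hne
      · exact hsT hs'T
      · exact (hd hne).le_bot ⟨hxs, hxs'⟩
  · intro f hf ih
    choose T hT using ih
    exact ⟨⋃ i, T i, by simp_rw [Set.biUnion_iUnion]; exact Set.iUnion_congr hT⟩

lemma condexp_partition {Ω : Type*} {m0 : MeasurableSpace Ω} {m : MeasurableSpace Ω}
    (hm : m ≤ m0) (B : ℕ → Set Ω)
    (hgen : m = MeasurableSpace.generateFrom (Set.range B))
    (hd : Pairwise (Function.onFun Disjoint B)) (hc : (⋃ s, B s) = Set.univ)
    (μ ν : @MeasureTheory.Measure Ω m0) [IsProbabilityMeasure μ] [IsProbabilityMeasure ν]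
    (hνμ : ν ≪ μ) (hpos : ∀ s, 0 < μ (B s))
    (c : Ω → ℕ) (hcmem : ∀ ω, ω ∈ B (c ω)) :
    μ[fun ω => (ν.rnDeriv μ ω).toReal | m]
      =ᵐ[μ] fun ω => (ν (B (c ω))).toReal / (μ (B (c ω))).toReal := by
  letI : MeasurableSpace Ω := m0
  have hcu : ∀ {ω s}, ω ∈ B s → c ω = s := by
    intro ω s hs
    by_contra hne
    exact (Set.disjoint_left.mp (hd hne) (hcmem ω)) hs
  have hBm : ∀ s, MeasurableSet[m] (B s) := fun s => by
    rw [hgen]; exact MeasurableSpace.measurableSet_generateFrom ⟨s, rfl⟩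
  have hB0 : ∀ s, MeasurableSet[m0] (B s) := fun s => hm _ (hBm s)
  have hμBfin : ∀ s, μ (B s) ≠ ⊤ := fun s => measure_ne_top μ _
  have hμBpos : ∀ s, 0 < (μ (B s)).toReal := fun s =>
    ENNReal.toReal_pos (hpos s).ne' (hμBfin s)
  set r : ℕ → ℝ := fun s => (ν (B s)).toReal / (μ (B s)).toReal with hr
  set g : Ω → ℝ := fun ω => r (c ω) with hg
  have hpre : ∀ s, c ⁻¹' {s} = B s := by
    intro s
    ext ω
    simp only [Set.mem_preimage, Set.mem_singleton_iff]
    exact ⟨fun h => h ▸ hcmem ω, fun h => hcu h⟩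
  have hcmeas : Measurable[m] c := by
    letI := m; exact measurable_to_countable' fun s => (hpre s) ▸ hBm s
  have hgmeas : Measurable[m] g := by
    letI := m; exact (measurable_from_top (f := r)).comp hcmeas
  have hgmeas0 : Measurable[m0] g := hgmeas.mono hm le_rfl
  have hrnonneg : ∀ s, 0 ≤ r s := fun s => div_nonneg ENNReal.toReal_nonneg ENNReal.toReal_nonneg
  have hterm : ∀ s, ENNReal.ofReal (r s) * μ (B s) = ν (B s) := by
    intro s
    rw [hr]
    rw [ENNReal.ofReal_div_of_pos (hμBpos s), ENNReal.ofReal_toReal (measure_ne_top ν _),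
      ENNReal.ofReal_toReal (hμBfin s),
      ENNReal.div_mul_cancel (hpos s).ne' (hμBfin s)]
  have hint : Integrable g μ := by
    refine ⟨hgmeas0.aestronglyMeasurable, ?_⟩
    rw [hasFiniteIntegral_iff_norm]
    calc ∫⁻ ω, ENNReal.ofReal ‖g ω‖ ∂μ
        = ∫⁻ ω in ⋃ s, B s, ENNReal.ofReal ‖g ω‖ ∂μ := by rw [hc, setLIntegral_univ]
      _ = ∑' s, ∫⁻ ω in B s, ENNReal.ofReal ‖g ω‖ ∂μ := lintegral_iUnion hB0 hd _
      _ = ∑' s, ENNReal.ofReal (r s) * μ (B s) := by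
          refine tsum_congr fun s => ?_
          rw [show (∫⁻ ω in B s, ENNReal.ofReal ‖g ω‖ ∂μ)
              = ∫⁻ _ω in B s, ENNReal.ofReal (r s) ∂μ from
            setLIntegral_congr_fun (hB0 s) (fun ω hω => by
              simp only [hg, hcu hω, Real.norm_eq_abs, abs_of_nonneg (hrnonneg s)]),
            setLIntegral_const]
      _ = ∑' s, ν (B s) := tsum_congr hterm
      _ = ν (⋃ s, B s) := (measure_iUnion hd hB0).symm
      _ < ⊤ := by rw [hc]; exact (measure_lt_top ν _)
  have hint_g_atom : ∀ s, ∫ ω in B s, g ω ∂μ = (ν (B s)).toReal := by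
    intro s
    rw [show (∫ ω in B s, g ω ∂μ) = ∫ _ω in B s, r s ∂μ from
        setIntegral_congr_fun (hB0 s) (fun ω hω => by simp only [hg, hcu hω]),
      setIntegral_const, smul_eq_mul, hr]
    exact mul_div_cancel₀ _ (hμBpos s).ne'
  have hf : Integrable (fun ω => (ν.rnDeriv μ ω).toReal) μ :=
    Measure.integrable_toReal_rnDeriv
  refine (ae_eq_condExp_of_forall_setIntegral_eq hm hf
    (fun S hS hSfin => hint.integrableOn) (fun S hS hSfin => ?_)
    (hgmeas.stronglyMeasurable.aestronglyMeasurable)).symm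
  obtain ⟨T, rfl⟩ := unions_of_atoms B hd hc (hgen ▸ hS)
  have hTsub : (⋃ s ∈ T, B s) = ⋃ s : T, B s := by rw [Set.iUnion_subtype]
  have hdT : Pairwise (Function.onFun Disjoint fun s : T => B s) :=
    fun a b hab => hd (Subtype.coe_injective.ne hab)
  rw [hTsub, integral_iUnion (fun s : T => hB0 s) hdT hint.integrableOn,
    integral_iUnion (fun s : T => hB0 s) hdT hf.integrableOn]
  exact tsum_congr fun s => by
    rw [hint_g_atom, Measure.setIntegral_toReal_rnDeriv hνμ, measureReal_def]

/-- **Condition A** of the paper: `𝓕` is generated by `⋃ n, ℱ n` and each `ℱ n` is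
generated by a countable measurable partition `(A n s)_s` of `Ω` which is refined by
the partition at time `n + 1` according to the index sets `I n s`. -/
structure CondA {Ω : Type*} (m0 : MeasurableSpace Ω) (ℱ : MeasureTheory.Filtration ℕ m0)
    (A : ℕ → ℕ → Set Ω) (I : ℕ → ℕ → Set ℕ) : Prop where
  gen_top : (⨆ n, (ℱ n : MeasurableSpace Ω)) = m0
  gen : ∀ n, (ℱ n : MeasurableSpace Ω) = MeasurableSpace.generateFrom (Set.range (A n))
  disj : ∀ n, Pairwise (Function.onFun Disjoint (A n))
  cover : ∀ n, (⋃ s, A n s) = Set.univ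
  idisj : ∀ n, Pairwise (Function.onFun Disjoint (I n))
  icover : ∀ n, (⋃ s, I n s) = Set.univ
  refines : ∀ n s, A n s = ⋃ j ∈ I n s, A (n + 1) j

/-- **Condition B** of the paper for the measures `P i`, with distinguished index `i₀`:
`P 0 (A n s) > 0` and the conditional measures of the cells are dominated by those of
`P i₀`. -/
structure CondB {Ω : Type*} {m0 : MeasurableSpace Ω} {k : ℕ}
    (P : Fin (k + 1) → MeasureTheory.Measure Ω)
    (A : ℕ → ℕ → Set Ω) (I : ℕ → ℕ → Set ℕ) (i₀ : Fin (k + 1)) : Prop where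
  pos : ∀ n s, 0 < P 0 (A n s)
  dom : ∀ (i : Fin (k + 1)) (n s j : ℕ), j ∈ I n s →
    (P i (A (n + 1) j)).toReal / (P i (A n s)).toReal ≤
    (P i₀ (A (n + 1) j)).toReal / (P i₀ (A n s)).toReal

/-- **Lemma `mq10` of the paper.**
Under conditions A and B, for all `l`, `i` and `n`, almost surely
`(dP i/dP l) / E^{P l}[dP i/dP l | ℱ n] ≤ (dP i₀/dP l) / E^{P l}[dP i₀/dP l | ℱ n]`. -/
theorem stmt9 {Ω : Type*} {m0 : MeasurableSpace Ω}
    (ℱ : Filtration ℕ m0) (A : ℕ → ℕ → Set Ω) (I : ℕ → ℕ → Set ℕ)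
    (hA : CondA m0 ℱ A I)
    (k : ℕ) (P : Fin (k + 1) → Measure Ω)
    (hP_prob : ∀ i, IsProbabilityMeasure (P i))
    (hP_equiv : ∀ i j, P i ≪ P j)
    (i₀ : Fin (k + 1)) (hB : CondB P A I i₀) :
    ∀ l i : Fin (k + 1), ∀ n : ℕ, ∀ᵐ ω ∂(P l),
      ((P i).rnDeriv (P l) ω).toReal /
        (((P l)[fun ω' => ((P i).rnDeriv (P l) ω').toReal | ℱ n]) ω) ≤
      ((P i₀).rnDeriv (P l) ω).toReal /
        (((P l)[fun ω' => ((P i₀).rnDeriv (P l) ω').toReal | ℱ n]) ω) := by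
  intro l i n
  haveI := hP_prob l
  have hpos : ∀ (j : Fin (k + 1)) (m s : ℕ), 0 < P j (A m s) := by
    intro j m s
    rw [pos_iff_ne_zero]
    intro h0
    exact absurd ((hP_equiv 0 j) h0) (hB.pos m s).ne'
  have hex : ∀ (m : ℕ) (ω : Ω), ∃ s, ω ∈ A m s := fun m ω =>
    Set.mem_iUnion.mp ((hA.cover m) ▸ Set.mem_univ ω)
  choose c hc using hex
  have hcu : ∀ (m : ℕ) (ω : Ω) (s : ℕ), ω ∈ A m s → c m ω = s := by
    intro m ω s hs
    by_contra hne
    exact (Set.disjoint_left.mp (hA.disj m hne) (hc m ω)) hs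
  set f : Fin (k + 1) → Ω → ℝ := fun j ω => ((P j).rnDeriv (P l) ω).toReal with hf
  set F : Fin (k + 1) → ℕ → Ω → ℝ := fun j m ω => (P j (A m (c m ω))).toReal with hF
  have hFpos : ∀ (j : Fin (k + 1)) (m : ℕ) (ω : Ω), 0 < F j m ω := fun j m ω =>
    ENNReal.toReal_pos (hpos j m _).ne' (measure_ne_top _ _)
  have hcond : ∀ (j : Fin (k + 1)) (m : ℕ),
      (P l)[f j | ℱ m] =ᵐ[P l] fun ω => F j m ω / F l m ω := by
    intro j m
    haveI := hP_prob j
    exact condexp_partition (ℱ.le m) (A m) (hA.gen m) (hA.disj m) (hA.cover m)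
      (P l) (P j) (hP_equiv j l) (fun s => hpos l m s) (c m) (hc m)
  have hlevy : ∀ (j : Fin (k + 1)),
      ∀ᵐ ω ∂(P l), Tendsto (fun m => ((P l)[f j | ℱ m]) ω) atTop (𝓝 (f j ω)) := by
    intro j
    haveI := hP_prob j
    have hmeas : StronglyMeasurable[⨆ m, ℱ m] (f j) := by
      rw [hA.gen_top]
      exact ((Measure.measurable_rnDeriv _ _).ennreal_toReal).stronglyMeasurable
    exact Integrable.tendsto_ae_condExp Measure.integrable_toReal_rnDeriv hmeas
  have hstep : ∀ (ω : Ω) (m : ℕ),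
      F i (m + 1) ω * F i₀ m ω ≤ F i₀ (m + 1) ω * F i m ω := by
    intro ω m
    have hmem : c (m + 1) ω ∈ I m (c m ω) := by
      obtain ⟨s', hs'⟩ := Set.mem_iUnion.mp ((hA.icover m) ▸ Set.mem_univ (c (m + 1) ω))
      have hω : ω ∈ A m s' := by
        rw [hA.refines m s']
        exact Set.mem_biUnion hs' (hc (m + 1) ω)
      rwa [hcu m ω s' hω]
    have hdom := hB.dom i m (c m ω) (c (m + 1) ω) hmem
    rwa [div_le_div_iff₀ (hFpos i m ω) (hFpos i₀ m ω)] at hdom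
  have htel : ∀ (ω : Ω) (m : ℕ), n ≤ m →
      F i m ω * F i₀ n ω ≤ F i₀ m ω * F i n ω := by
    intro ω m hm
    induction m, hm using Nat.le_induction with
    | base => exact le_of_eq (mul_comm _ _)
    | succ m hm ih =>
      nlinarith [hstep ω m, hFpos i m ω, hFpos i₀ m ω, hFpos i (m + 1) ω,
        hFpos i₀ (m + 1) ω, hFpos i n ω, hFpos i₀ n ω,
        mul_le_mul (hstep ω m) ih (by positivity) (by positivity)]
  filter_upwards [hlevy i, hlevy i₀, ae_all_iff.mpr fun m => hcond i m,
    ae_all_iff.mpr fun m => hcond i₀ m] with ω hti hti₀ hci hci₀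
  rw [hci n, hci₀ n, div_le_div_iff₀ (div_pos (hFpos i n ω) (hFpos l n ω))
    (div_pos (hFpos i₀ n ω) (hFpos l n ω))]
  have h1 : Tendsto (fun m => F i m ω / F l m ω * (F i₀ n ω / F l n ω)) atTop
      (𝓝 (f i ω * (F i₀ n ω / F l n ω))) := (hti.congr hci).mul_const _
  have h2 : Tendsto (fun m => F i₀ m ω / F l m ω * (F i n ω / F l n ω)) atTop
      (𝓝 (f i₀ ω * (F i n ω / F l n ω))) := (hti₀.congr hci₀).mul_const _
  refine le_of_tendsto_of_tendsto h1 h2 (eventually_atTop.2 ⟨n, fun m hm => ?_⟩)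
  show F i m ω / F l m ω * (F i₀ n ω / F l n ω) ≤ F i₀ m ω / F l m ω * (F i n ω / F l n ω)
  rw [div_mul_div_comm, div_mul_div_comm]
  exact div_le_div_of_nonneg_right (htel ω m hm) (by positivity)
end

section
/- Let the filtration (𝓕_n)_{n≥1} on (Ω, 𝓕) satisfy condition A and let the mutually equivalent probability measures P₁, …, P_k satisfy condition B with distinguished index i₀. Let ξ be a nonnegative bounded random variable on (Ω, 𝓕). Then for every l ∈ {1, …, k} and all n > m, almost surely: E^{P_l}[ max_{1≤i≤k} E^{P_i}[ξ | 𝓕_n] | 𝓕_m ] = max_{1≤i≤k} E^{P_l}[ ξ φ_n^{P_i} | 𝓕_m ], where φ_n^{P_i} = (dP_i/dP_l) · (E^{P_l}[dP_i/dP_l | 𝓕_n])^{−1}. -/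
open MeasureTheory Filter Set
open scoped ENNReal

section Aux

variable {Ω : Type*} {m0 : MeasurableSpace Ω} {ℱ : Filtration ℕ m0}
  {A : ℕ → ℕ → Set Ω} {I : ℕ → ℕ → Set ℕ}

lemma atom_meas (hA : CondA m0 ℱ A I) (n s : ℕ) : MeasurableSet[ℱ n] (A n s) := by
  rw [hA.gen n]; exact MeasurableSpace.measurableSet_generateFrom ⟨s, rfl⟩

lemma atom_meas0 (hA : CondA m0 ℱ A I) (n s : ℕ) : MeasurableSet[m0] (A n s) :=
  ℱ.le n _ (atom_meas hA n s)

lemma subset_atom (hA : CondA m0 ℱ A I) {n : ℕ} : ∀ m, n ≤ m → ∀ t, ∃ s, A m t ⊆ A n s := by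
  intro m hnm
  induction m, hnm using Nat.le_induction with
  | base => exact fun t => ⟨t, subset_rfl⟩
  | succ m hnm ih =>
    intro t
    obtain ⟨u, hu⟩ : ∃ u, t ∈ I m u := by
      have ht : t ∈ ⋃ s, I m s := by rw [hA.icover m]; exact mem_univ t
      exact mem_iUnion.mp ht
    have h1 : A (m + 1) t ⊆ A m u := by
      rw [hA.refines m u]; exact Set.subset_biUnion_of_mem hu
    obtain ⟨s, hs⟩ := ih u
    exact ⟨s, h1.trans hs⟩

lemma atom_eq_of_nonempty_inter (hA : CondA m0 ℱ A I) {n s s' : ℕ}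
    (h : (A n s ∩ A n s').Nonempty) : s = s' := by
  by_contra hne
  exact (Set.not_disjoint_iff_nonempty_inter.mpr h) (hA.disj n hne)

end Aux

section Meas

variable {Ω : Type*} {m0 : MeasurableSpace Ω} {ℱ : Filtration ℕ m0}
  {A : ℕ → ℕ → Set Ω} {I : ℕ → ℕ → Set ℕ} {k : ℕ} {P : Fin (k + 1) → Measure Ω}
  {i₀ : Fin (k + 1)}

lemma atom_pos (hP_equiv : ∀ i j, P i ≪ P j) (hB : CondB P A I i₀)
    (i : Fin (k + 1)) (n s : ℕ) : P i (A n s) ≠ 0 := by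
  intro h
  exact absurd (hP_equiv 0 i h) (hB.pos n s).ne'

lemma atom_nonempty (hB : CondB P A I i₀) (n s : ℕ) : (A n s).Nonempty :=
  nonempty_of_measure_ne_zero (hB.pos n s).ne'

lemma onestep (hA : CondA m0 ℱ A I) (hP_prob : ∀ i, IsProbabilityMeasure (P i))
    (hP_equiv : ∀ i j, P i ≪ P j) (hB : CondB P A I i₀)
    (i : Fin (k + 1)) (n s j : ℕ) (hj : j ∈ I n s) :
    (P i (A (n + 1) j)).toReal * (P i₀ (A n s)).toReal =
      (P i₀ (A (n + 1) j)).toReal * (P i (A n s)).toReal := by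
  have hfin : ∀ (i' : Fin (k + 1)) (n' s' : ℕ), P i' (A n' s') ≠ ∞ := fun i' n' s' => by
    have := hP_prob i'; exact measure_ne_top _ _
  have hsum : ∀ i' : Fin (k + 1), (∑' j' : I n s, P i' (A (n + 1) (j' : ℕ))) = P i' (A n s) := by
    intro i'
    have hdisj : Pairwise (Function.onFun Disjoint (fun j' : I n s => A (n + 1) (j' : ℕ))) := by
      intro a b hab
      exact hA.disj (n + 1) (fun h => hab (Subtype.ext h))
    conv_rhs => rw [hA.refines n s]
    rw [Set.biUnion_eq_iUnion]
    exact (measure_iUnion hdisj (fun j' => atom_meas0 hA (n + 1) j')).symm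
  have hdiv : ∀ i' : Fin (k + 1),
      (∑' j' : I n s, P i' (A (n + 1) (j' : ℕ)) / P i' (A n s)) = 1 := by
    intro i'
    simp_rw [div_eq_mul_inv]
    rw [ENNReal.tsum_mul_right, hsum i',
      ENNReal.mul_inv_cancel (atom_pos hP_equiv hB i' n s) (hfin i' n s)]
  have hratfin : ∀ (i' : Fin (k + 1)) (j' : ℕ),
      P i' (A (n + 1) j') / P i' (A n s) ≠ ∞ := fun i' j' =>
    (ENNReal.div_lt_top (hfin i' (n + 1) j') (atom_pos hP_equiv hB i' n s)).ne
  have hle : ∀ j' : I n s,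
      P i (A (n + 1) (j' : ℕ)) / P i (A n s) ≤ P i₀ (A (n + 1) (j' : ℕ)) / P i₀ (A n s) := by
    intro j'
    have hd := hB.dom i n s j' j'.2
    rw [← ENNReal.toReal_div, ← ENNReal.toReal_div] at hd
    exact (ENNReal.toReal_le_toReal (hratfin i j') (hratfin i₀ j')).mp hd
  have heq : P i (A (n + 1) j) / P i (A n s) = P i₀ (A (n + 1) j) / P i₀ (A n s) := by
    rcases (hle ⟨j, hj⟩).lt_or_eq with hlt | he
    · exfalso
      have h2 := ENNReal.tsum_lt_tsum (i := (⟨j, hj⟩ : I n s))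
        (by rw [hdiv i]; exact ENNReal.one_ne_top) hle hlt
      rw [hdiv i, hdiv i₀] at h2
      exact lt_irrefl _ h2
    · exact he
  have h3 := congrArg ENNReal.toReal heq
  rw [ENNReal.toReal_div, ENNReal.toReal_div] at h3
  have hb : 0 < (P i (A n s)).toReal :=
    ENNReal.toReal_pos (atom_pos hP_equiv hB i n s) (hfin i n s)
  have hd : 0 < (P i₀ (A n s)).toReal :=
    ENNReal.toReal_pos (atom_pos hP_equiv hB i₀ n s) (hfin i₀ n s)
  field_simp at h3
  linarith

lemma ratio0 (hA : CondA m0 ℱ A I) (hP_prob : ∀ i, IsProbabilityMeasure (P i))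
    (hP_equiv : ∀ i j, P i ≪ P j) (hB : CondB P A I i₀)
    {n : ℕ} : ∀ m, n ≤ m → ∀ (i : Fin (k + 1)) (s t : ℕ), A m t ⊆ A n s →
    (P i (A m t)).toReal * (P i₀ (A n s)).toReal =
      (P i₀ (A m t)).toReal * (P i (A n s)).toReal := by
  intro m hnm
  induction m, hnm using Nat.le_induction with
  | base =>
    intro i s t hsub
    obtain ⟨x, hx⟩ := atom_nonempty hB n t
    obtain rfl : t = s := atom_eq_of_nonempty_inter hA ⟨x, hx, hsub hx⟩
    ring
  | succ m hnm ih =>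
    intro i s t hsub
    obtain ⟨u, hu⟩ : ∃ u, t ∈ I m u := by
      have ht : t ∈ ⋃ s', I m s' := by rw [hA.icover m]; exact mem_univ t
      exact mem_iUnion.mp ht
    have h1 : A (m + 1) t ⊆ A m u := by
      rw [hA.refines m u]; exact Set.subset_biUnion_of_mem hu
    obtain ⟨x, hx⟩ := atom_nonempty hB (m + 1) t
    obtain ⟨s', hs'⟩ := subset_atom hA m hnm u
    obtain rfl : s = s' := atom_eq_of_nonempty_inter hA ⟨x, hsub hx, hs' (h1 hx)⟩
    have e1 := onestep hA hP_prob hP_equiv hB i m u t hu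
    have e2 := ih i s u hs'
    have hfin : ∀ (i' : Fin (k + 1)) (n' s'' : ℕ), P i' (A n' s'') ≠ ∞ := fun i' n' s'' => by
      have := hP_prob i'; exact measure_ne_top _ _
    have hbi : 0 < (P i (A m u)).toReal :=
      ENNReal.toReal_pos (atom_pos hP_equiv hB i m u) (hfin i m u)
    have hb0 : 0 < (P i₀ (A m u)).toReal :=
      ENNReal.toReal_pos (atom_pos hP_equiv hB i₀ m u) (hfin i₀ m u)
    refine mul_left_cancel₀ (mul_ne_zero hb0.ne' hbi.ne') ?_
    linear_combination ((P i (A m u)).toReal * (P i₀ (A n s)).toReal) * e1 +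
      ((P i₀ (A (m + 1) t)).toReal * (P i (A m u)).toReal) * e2

end Meas

section Key

variable {Ω : Type*} {m0 : MeasurableSpace Ω} {ℱ : Filtration ℕ m0}
  {A : ℕ → ℕ → Set Ω} {I : ℕ → ℕ → Set ℕ} {k : ℕ} {P : Fin (k + 1) → Measure Ω}
  {i₀ : Fin (k + 1)}

lemma ratioP (hA : CondA m0 ℱ A I) (hP_prob : ∀ i, IsProbabilityMeasure (P i))
    (hP_equiv : ∀ i j, P i ≪ P j) (hB : CondB P A I i₀)
    {n m : ℕ} (hnm : n ≤ m) (i l : Fin (k + 1)) (s t : ℕ) (hsub : A m t ⊆ A n s) :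
    (P i (A m t)).toReal * (P l (A n s)).toReal =
      (P l (A m t)).toReal * (P i (A n s)).toReal := by
  have hfin : ∀ (i' : Fin (k + 1)) (n' s' : ℕ), P i' (A n' s') ≠ ∞ := fun i' n' s' => by
    have := hP_prob i'; exact measure_ne_top _ _
  have e1 := ratio0 hA hP_prob hP_equiv hB m hnm i s t hsub
  have e2 := ratio0 hA hP_prob hP_equiv hB m hnm l s t hsub
  have hc0 : 0 < (P i₀ (A n s)).toReal :=
    ENNReal.toReal_pos (atom_pos hP_equiv hB i₀ n s) (hfin i₀ n s)
  refine mul_left_cancel₀ hc0.ne' ?_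
  linear_combination (P l (A n s)).toReal * e1 - (P i (A n s)).toReal * e2

lemma key_withDensity (hA : CondA m0 ℱ A I) (hP_prob : ∀ i, IsProbabilityMeasure (P i))
    (hP_equiv : ∀ i j, P i ≪ P j) (hB : CondB P A I i₀)
    (i l : Fin (k + 1)) (n : ℕ) :
    ∃ H : Ω → ℝ≥0∞, Measurable[ℱ n] H ∧ P i = (P l).withDensity H := by
  classical
  have hfin : ∀ (i' : Fin (k + 1)) (n' s' : ℕ), P i' (A n' s') ≠ ∞ := fun i' n' s' => by
    have := hP_prob i'; exact measure_ne_top _ _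
  set c : ℕ → ℝ≥0∞ := fun s => P i (A n s) / P l (A n s) with hc
  have hcfin : ∀ s, c s ≠ ∞ := fun s =>
    (ENNReal.div_lt_top (hfin i n s) (atom_pos hP_equiv hB l n s)).ne
  set H : Ω → ℝ≥0∞ := fun ω => ∑' s, (A n s).indicator (fun _ => c s) ω with hH
  have hHmeas : Measurable[ℱ n] H :=
    Measurable.ennreal_tsum fun s => Measurable.indicator measurable_const (atom_meas hA n s)
  have hHmeas0 : Measurable[m0] H := hHmeas.mono (ℱ.le n) le_rfl
  have hcomp : ∀ B : Set Ω, MeasurableSet B →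
      (P l).withDensity H B = ∑' s, c s * P l (A n s ∩ B) := by
    intro B hB'
    rw [withDensity_apply _ hB']
    calc ∫⁻ x in B, H x ∂(P l)
        = ∑' s, ∫⁻ x in B, (A n s).indicator (fun _ => c s) x ∂(P l) :=
          lintegral_tsum fun s =>
            (measurable_const.indicator (atom_meas0 hA n s)).aemeasurable
      _ = ∑' s, c s * P l (A n s ∩ B) := by
          refine tsum_congr fun s => ?_
          rw [lintegral_indicator_const (atom_meas0 hA n s),
            Measure.restrict_apply (atom_meas0 hA n s)]
  have huniv : (P l).withDensity H Set.univ = 1 := by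
    rw [hcomp Set.univ MeasurableSet.univ]
    simp only [Set.inter_univ]
    have h1 : ∀ s, c s * P l (A n s) = P i (A n s) := fun s =>
      ENNReal.div_mul_cancel (atom_pos hP_equiv hB l n s) (hfin l n s)
    calc (∑' s, c s * P l (A n s)) = ∑' s, P i (A n s) := tsum_congr h1
      _ = P i (⋃ s, A n s) := (measure_iUnion (hA.disj n) (atom_meas0 hA n)).symm
      _ = 1 := by rw [hA.cover n]; exact measure_univ
  refine ⟨H, hHmeas, ?_⟩
  have : IsFiniteMeasure ((P l).withDensity H) := ⟨by rw [huniv]; exact ENNReal.one_lt_top⟩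
  have := hP_prob i
  set C : Set (Set Ω) := {B | ∃ m, n ≤ m ∧ ∃ t, B = A m t} with hC
  have hgen : m0 = MeasurableSpace.generateFrom C := by
    refine le_antisymm ?_ ?_
    · rw [← hA.gen_top]
      refine iSup_le fun m => ?_
      calc (ℱ m : MeasurableSpace Ω) ≤ ℱ (max m n) := ℱ.mono (le_max_left m n)
        _ = MeasurableSpace.generateFrom (Set.range (A (max m n))) := hA.gen (max m n)
        _ ≤ MeasurableSpace.generateFrom C := by
            refine MeasurableSpace.generateFrom_mono fun B hB' => ?_
            obtain ⟨t, rfl⟩ := hB'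
            exact ⟨max m n, le_max_right m n, t, rfl⟩
    · refine MeasurableSpace.generateFrom_le fun B hB' => ?_
      obtain ⟨m, hm, t, rfl⟩ := hB'
      exact atom_meas0 hA m t
  have hpi : IsPiSystem C := by
    have hkey : ∀ m1 m2 t1 t2, m1 ≤ m2 → (A m1 t1 ∩ A m2 t2).Nonempty →
        A m1 t1 ∩ A m2 t2 = A m2 t2 := by
      intro m1 m2 t1 t2 h12 ⟨x, hx1, hx2⟩
      obtain ⟨s, hs⟩ := subset_atom hA m2 h12 t2
      obtain rfl : t1 = s := atom_eq_of_nonempty_inter hA ⟨x, hx1, hs hx2⟩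
      exact Set.inter_eq_self_of_subset_right hs
    rintro B1 ⟨m1, hm1, t1, rfl⟩ B2 ⟨m2, hm2, t2, rfl⟩ hne
    rcases le_total m1 m2 with h12 | h21
    · rw [hkey m1 m2 t1 t2 h12 hne]; exact ⟨m2, hm2, t2, rfl⟩
    · rw [Set.inter_comm] at hne ⊢
      rw [hkey m2 m1 t2 t1 h21 hne]; exact ⟨m1, hm1, t1, rfl⟩
  refine MeasureTheory.ext_of_generate_finite C hgen hpi ?_ ?_
  · rintro B ⟨m, hnm, t, rfl⟩
    rw [hcomp (A m t) (atom_meas0 hA m t)]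
    obtain ⟨s₀, hsub⟩ := subset_atom hA m hnm t
    rw [tsum_eq_single s₀ ?_]
    · rw [Set.inter_eq_self_of_subset_right hsub]
      have hfin2 : c s₀ * P l (A m t) ≠ ∞ := ENNReal.mul_ne_top (hcfin s₀) (hfin l m t)
      rw [← ENNReal.toReal_eq_toReal_iff' (hfin i m t) hfin2]
      rw [ENNReal.toReal_mul, hc]
      simp only []
      rw [ENNReal.toReal_div]
      have hr := ratioP hA hP_prob hP_equiv hB hnm i l s₀ t hsub
      have hls : 0 < (P l (A n s₀)).toReal :=
        ENNReal.toReal_pos (atom_pos hP_equiv hB l n s₀) (hfin l n s₀)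
      field_simp
      linear_combination hr
    · intro s hs
      have hempty : A n s ∩ A m t = ∅ := by
        rw [Set.eq_empty_iff_forall_notMem]
        rintro x ⟨hx1, hx2⟩
        exact hs (atom_eq_of_nonempty_inter hA ⟨x, hx1, hsub hx2⟩)
      rw [hempty, measure_empty, mul_zero]
  · rw [huniv]; exact measure_univ

end Key

/-- **Lemma `q3` of the paper.**
Under conditions A and B, for a nonnegative bounded random variable `ξ`, every `l`
and all `n > m`, almost surely
`E^{P l}[max_i E^{P i}[ξ|ℱ n] | ℱ m] = max_i E^{P l}[ξ φ_n^{P i} | ℱ m]`, where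
`φ_n^{P i} = (dP i/dP l) ⬝ (E^{P l}[dP i/dP l | ℱ n])⁻¹`. -/
theorem stmt11 {Ω : Type*} {m0 : MeasurableSpace Ω}
    (ℱ : Filtration ℕ m0) (A : ℕ → ℕ → Set Ω) (I : ℕ → ℕ → Set ℕ)
    (hA : CondA m0 ℱ A I)
    (k : ℕ) (P : Fin (k + 1) → Measure Ω)
    (hP_prob : ∀ i, IsProbabilityMeasure (P i))
    (hP_equiv : ∀ i j, P i ≪ P j)
    (i₀ : Fin (k + 1)) (hB : CondB P A I i₀)
    (ξ : Ω → ℝ) (hξ_nonneg : ∀ ω, 0 ≤ ξ ω) (hξ_bdd : ∃ C : ℝ, ∀ ω, ξ ω ≤ C) :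
    ∀ l : Fin (k + 1), ∀ m n : ℕ, m < n →
      ((P l)[(fun ω => ⨆ i : Fin (k + 1), ((P i)[ξ | ℱ n]) ω) | ℱ m]) =ᵐ[P l]
      fun ω => ⨆ i : Fin (k + 1),
        (((P l)[(fun ω' => ξ ω' * (((P i).rnDeriv (P l) ω').toReal *
          (((P l)[fun ω'' => ((P i).rnDeriv (P l) ω'').toReal | ℱ n]) ω')⁻¹)) | ℱ m]) ω) := by
  intro l m n hmn
  haveI := hP_prob l
  have hΩ : Nonempty Ω := ⟨(atom_nonempty hB 0 0).choose⟩
  obtain ⟨C, hC⟩ := hξ_bdd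
  have hC0 : 0 ≤ C := le_trans (hξ_nonneg (Classical.arbitrary Ω)) (hC _)
  have hξabs : ∀ ω, ‖ξ ω‖ ≤ C := fun ω => by
    rw [Real.norm_eq_abs, abs_of_nonneg (hξ_nonneg ω)]; exact hC ω
  have hmn' : (ℱ m : MeasurableSpace Ω) ≤ ℱ n := ℱ.mono hmn.le
  have hrint : ∀ i : Fin (k + 1),
      Integrable (fun ω => ((P i).rnDeriv (P l) ω).toReal) (P l) := fun i => by
    haveI := hP_prob i; exact Measure.integrable_toReal_rnDeriv
  -- the density is a.e. equal to an ℱ n-measurable nonneg function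
  have hkey : ∀ i : Fin (k + 1), ∃ g : Ω → ℝ, StronglyMeasurable[ℱ n] g ∧ (∀ ω, 0 ≤ g ω) ∧
      (fun ω => ((P i).rnDeriv (P l) ω).toReal) =ᵐ[P l] g := by
    intro i
    obtain ⟨H, hHmeas, hHeq⟩ := key_withDensity hA hP_prob hP_equiv hB i l n
    refine ⟨fun ω => (H ω).toReal, (hHmeas.ennreal_toReal).stronglyMeasurable,
      fun ω => ENNReal.toReal_nonneg, ?_⟩
    have h1 : (P i).rnDeriv (P l) =ᵐ[P l] H := by
      rw [hHeq]; exact Measure.rnDeriv_withDensity (P l) (hHmeas.mono (ℱ.le n) le_rfl)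
    filter_upwards [h1] with ω hω using by rw [hω]
  choose g hgmeas hgnonneg hgeq using hkey
  have hgint : ∀ i, Integrable (g i) (P l) := fun i => (hrint i).congr (hgeq i)
  have hrpos : ∀ i : Fin (k + 1), ∀ᵐ ω ∂(P l), 0 < ((P i).rnDeriv (P l) ω).toReal := by
    intro i
    haveI := hP_prob i
    have h1 : ∀ᵐ ω ∂(P l), 0 < (P i).rnDeriv (P l) ω :=
      (hP_equiv l i).ae_le (Measure.rnDeriv_pos (hP_equiv i l))
    have h2 : ∀ᵐ ω ∂(P l), (P i).rnDeriv (P l) ω < ∞ := Measure.rnDeriv_lt_top _ _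
    filter_upwards [h1, h2] with ω hω1 hω2 using ENNReal.toReal_pos hω1.ne' hω2.ne
  have hcondr : ∀ i : Fin (k + 1),
      (P l)[fun ω'' => ((P i).rnDeriv (P l) ω'').toReal | ℱ n] =ᵐ[P l]
        fun ω => ((P i).rnDeriv (P l) ω).toReal := by
    intro i
    have h1 := condExp_congr_ae (μ := P l) (m := ℱ n) (hgeq i)
    rw [condExp_of_stronglyMeasurable (ℱ.le n) (hgmeas i) (hgint i)] at h1
    exact h1.trans (hgeq i).symm
  have hξφ : ∀ i : Fin (k + 1),
      (fun ω' => ξ ω' * (((P i).rnDeriv (P l) ω').toReal *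
        (((P l)[fun ω'' => ((P i).rnDeriv (P l) ω'').toReal | ℱ n]) ω')⁻¹)) =ᵐ[P l] ξ := by
    intro i
    filter_upwards [hcondr i, hrpos i] with ω h1 h2
    rw [h1, mul_inv_cancel₀ h2.ne', mul_one]
  have hRHS : (fun ω => ⨆ i : Fin (k + 1),
      (((P l)[(fun ω' => ξ ω' * (((P i).rnDeriv (P l) ω').toReal *
        (((P l)[fun ω'' => ((P i).rnDeriv (P l) ω'').toReal | ℱ n]) ω')⁻¹)) | ℱ m]) ω))
      =ᵐ[P l] (P l)[ξ | ℱ m] := by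
    have h : ∀ᵐ ω ∂(P l), ∀ i : Fin (k + 1),
        (((P l)[(fun ω' => ξ ω' * (((P i).rnDeriv (P l) ω').toReal *
          (((P l)[fun ω'' => ((P i).rnDeriv (P l) ω'').toReal | ℱ n]) ω')⁻¹)) | ℱ m]) ω)
          = ((P l)[ξ | ℱ m]) ω :=
      ae_all_iff.mpr fun i => condExp_congr_ae (hξφ i)
    filter_upwards [h] with ω hω
    calc (⨆ i : Fin (k + 1), _) = ⨆ _ : Fin (k + 1), ((P l)[ξ | ℱ m]) ω := iSup_congr hω
      _ = ((P l)[ξ | ℱ m]) ω := ciSup_const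
  by_cases hint : Integrable ξ (P l)
  · -- main case
    have hcondi : ∀ i : Fin (k + 1), (P i)[ξ | ℱ n] =ᵐ[P l] (P l)[ξ | ℱ n] := by
      intro i
      haveI := hP_prob i
      have hinti : Integrable ξ (P i) :=
        Integrable.mono' (integrable_const C) (hint.1.mono_ac (hP_equiv i l))
          (Eventually.of_forall hξabs)
      have hbddl : ∀ᵐ ω ∂(P l), |((P l)[ξ | ℱ n]) ω| ≤ (C.toNNReal : ℝ) :=
        ae_bdd_condExp_of_ae_bdd (Eventually.of_forall fun ω => by
          rw [abs_of_nonneg (hξ_nonneg ω), Real.coe_toNNReal C hC0]; exact hC ω)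
      rw [Real.coe_toNNReal C hC0] at hbddl
      have hbddi : ∀ᵐ ω ∂(P i), ‖((P l)[ξ | ℱ n]) ω‖ ≤ C := by
        have h' : ∀ᵐ ω ∂(P i), |((P l)[ξ | ℱ n]) ω| ≤ C := (hP_equiv i l).ae_le hbddl
        filter_upwards [h'] with ω hω
        rw [Real.norm_eq_abs]; exact hω
      have hgi : Integrable ((P l)[ξ | ℱ n]) (P i) :=
        Integrable.mono' (integrable_const C)
          ((stronglyMeasurable_condExp.mono (ℱ.le n)).aestronglyMeasurable) hbddi
      have h := ae_eq_condExp_of_forall_setIntegral_eq (μ := P i) (ℱ.le n) hinti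
        (fun s _ _ => hgi.integrableOn) ?_
        stronglyMeasurable_condExp.aestronglyMeasurable
      · exact ((hP_equiv l i).ae_eq h).symm
      · intro s hs _
        have hs0 : MeasurableSet[m0] s := ℱ.le n s hs
        rw [← setIntegral_rnDeriv_smul (hP_equiv i l) hs0,
          ← setIntegral_rnDeriv_smul (hP_equiv i l) hs0]
        have hprod : Integrable (g i * ξ) (P l) := by
          refine Integrable.mono' ((hgint i).const_mul C)
            ((((hgmeas i).mono (ℱ.le n)).aestronglyMeasurable).mul hint.1) ?_
          refine Eventually.of_forall fun ω => ?_
          rw [Pi.mul_apply, Real.norm_eq_abs, abs_mul, abs_of_nonneg (hgnonneg i ω),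
            abs_of_nonneg (hξ_nonneg ω), mul_comm (C : ℝ) (g i ω)]
          exact mul_le_mul_of_nonneg_left (hC ω) (hgnonneg i ω)
        have hpull : (P l)[g i * ξ | ℱ n] =ᵐ[P l] g i * (P l)[ξ | ℱ n] :=
          condExp_mul_of_stronglyMeasurable_left (hgmeas i) hprod hint
        calc ∫ x in s, ((P i).rnDeriv (P l) x).toReal • ((P l)[ξ | ℱ n]) x ∂(P l)
            = ∫ x in s, g i x * ((P l)[ξ | ℱ n]) x ∂(P l) := by
              refine setIntegral_congr_ae hs0 ?_
              filter_upwards [hgeq i] with ω hω _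
              rw [smul_eq_mul, hω]
          _ = ∫ x in s, ((P l)[g i * ξ | ℱ n]) x ∂(P l) := by
              refine (setIntegral_congr_ae hs0 ?_).symm
              filter_upwards [hpull] with ω hω _
              rw [hω, Pi.mul_apply]
          _ = ∫ x in s, (g i * ξ) x ∂(P l) := setIntegral_condExp (ℱ.le n) hprod hs
          _ = ∫ x in s, ((P i).rnDeriv (P l) x).toReal • ξ x ∂(P l) := by
              refine setIntegral_congr_ae hs0 ?_
              filter_upwards [hgeq i] with ω hω _
              rw [Pi.mul_apply, smul_eq_mul, hω]
    have h1 : (fun ω => ⨆ i : Fin (k + 1), ((P i)[ξ | ℱ n]) ω) =ᵐ[P l] (P l)[ξ | ℱ n] := by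
      have h := ae_all_iff.mpr hcondi
      filter_upwards [h] with ω hω
      calc (⨆ i : Fin (k + 1), ((P i)[ξ | ℱ n]) ω)
          = ⨆ _ : Fin (k + 1), ((P l)[ξ | ℱ n]) ω := iSup_congr hω
        _ = ((P l)[ξ | ℱ n]) ω := ciSup_const
    exact ((condExp_congr_ae h1).trans
      (condExp_condExp_of_le hmn' (ℱ.le n))).trans hRHS.symm
  · -- degenerate case : ξ is not integrable
    have h0 : ∀ i : Fin (k + 1), (P i)[ξ | ℱ n] = 0 := by
      intro i
      haveI := hP_prob i
      refine condExp_of_not_integrable fun hi => hint ?_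
      exact Integrable.mono' (integrable_const C) (hi.1.mono_ac (hP_equiv l i))
        (Eventually.of_forall hξabs)
    have h1 : (fun ω => ⨆ i : Fin (k + 1), ((P i)[ξ | ℱ n]) ω) = fun _ => (0 : ℝ) := by
      funext ω
      simp only [h0, Pi.zero_apply, ciSup_const]
    rw [h1, show (fun _ : Ω => (0 : ℝ)) = (0 : Ω → ℝ) from rfl, condExp_zero]
    have h3 : (P l)[ξ | ℱ m] = 0 := condExp_of_not_integrable hint
    rw [h3] at hRHS
    exact hRHS.symm
end

section
/- Let the filtration (𝓕_n)_{n∈ℕ} on (Ω, 𝓕) satisfy condition A, and let M be a convex set of mutually equivalent probability measures such that P(A_s^n) > 0 for all P ∈ M, s, n, and there exists a measure P_{i₀} ∈ M with P(A_j^{n+1})/P(A_s^n) ≤ P_{i₀}(A_j^{n+1})/P_{i₀}(A_s^n) for all P ∈ M, all n, all s and all j ∈ I_s^n. Let ξ be a nonnegative integrable random variable with E^P ξ = 1 for every P ∈ M. Then the conditional expectation E^P[ξ | 𝓕_m] does not depend on P ∈ M (any two versions coincide a.s.), and the process (E^P[ξ | 𝓕_m])_{m∈ℕ} is a martingale relative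 to every measure in M; in particular it is a local regular supermartingale. -/
open MeasureTheory Filter Set
open scoped ENNReal

/-- **Theorem `mars5` of the paper.**
Under condition A, for a convex set `M` of mutually equivalent probability measures
charging all partition cells and dominated on cells by some `P i₀ ∈ M`, and for a
nonnegative integrable `ξ` with `E^P ξ = 1` for all `P ∈ M`, the conditional
expectation `E^P[ξ | ℱ m]` does not depend on `P ∈ M` and the process
`(E^P[ξ | ℱ m])_m` is a martingale relative to every measure of `M`; in particular
it is a local regular supermartingale. -/
theorem stmt16 {Ω : Type*} {m0 : MeasurableSpace Ω}
    (ℱ : Filtration ℕ m0) (A : ℕ → ℕ → Set Ω) (I : ℕ → ℕ → Set ℕ)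
    (hA : CondA m0 ℱ A I)
    (M : Set (Measure Ω)) (hMne : M.Nonempty)
    (hM_prob : ∀ P ∈ M, IsProbabilityMeasure P)
    (hM_conv : ∀ P ∈ M, ∀ Q ∈ M, ∀ α : ℝ, 0 ≤ α → α ≤ 1 →
      (ENNReal.ofReal (1 - α)) • P + (ENNReal.ofReal α) • Q ∈ M)
    (hM_equiv : ∀ P ∈ M, ∀ Q ∈ M, P ≪ Q)
    (hpos : ∀ P ∈ M, ∀ n s : ℕ, 0 < P (A n s))
    (Pi0 : Measure Ω) (hPi0 : Pi0 ∈ M)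
    (hdom : ∀ P ∈ M, ∀ n s j : ℕ, j ∈ I n s →
      (P (A (n + 1) j)).toReal / (P (A n s)).toReal ≤
      (Pi0 (A (n + 1) j)).toReal / (Pi0 (A n s)).toReal)
    (ξ : Ω → ℝ) (hξ_nonneg : ∀ ω, 0 ≤ ξ ω)
    (hξ_int : ∀ P ∈ M, Integrable ξ P)
    (hξ_exp : ∀ P ∈ M, ∫ ω, ξ ω ∂P = 1) :
    (∀ P ∈ M, ∀ Q ∈ M, ∀ R ∈ M, ∀ m : ℕ, (P[ξ | ℱ m]) =ᵐ[R] (Q[ξ | ℱ m])) ∧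
    (∀ P ∈ M, ∀ Q ∈ M, ∀ m : ℕ,
      (Q[(P[ξ | ℱ (m + 1)]) | ℱ m]) =ᵐ[Q] (P[ξ | ℱ m])) ∧
    (∀ P ∈ M, ∃ Mart g : ℕ → Ω → ℝ,
      (∀ Q ∈ M, Martingale Mart ℱ Q) ∧
      Adapted ℱ g ∧ (∀ ω, g 0 ω = 0) ∧ (∀ ω, Monotone fun m => g m ω) ∧
      ∀ Q ∈ M, ∀ m : ℕ, (P[ξ | ℱ m]) =ᵐ[Q] fun ω => Mart m ω - g m ω) := by
  obtain ⟨P0, hP0⟩ := hMne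
  -- basic measurability and finiteness facts
  have hmeasA : ∀ n s, MeasurableSet[ℱ n] (A n s) := fun n s => by
    rw [hA.gen n]; exact MeasurableSpace.measurableSet_generateFrom ⟨s, rfl⟩
  have hmeasA0 : ∀ n s, MeasurableSet (A n s) := fun n s => (ℱ.le n) _ (hmeasA n s)
  have hfin : ∀ P ∈ M, ∀ B : Set Ω, P B ≠ ∞ := fun P hP B => by
    haveI := hM_prob P hP; exact (measure_lt_top P B).ne
  have hposR : ∀ P ∈ M, ∀ n s, 0 < (P (A n s)).toReal := fun P hP n s =>
    ENNReal.toReal_pos (hpos P hP n s).ne' (hfin P hP _)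
  have hAne : ∀ n s, (A n s).Nonempty := fun n s =>
    nonempty_of_measure_ne_zero (hpos P0 hP0 n s).ne'
  have hparent : ∀ n t, ∃ s, t ∈ I n s := fun n t => by
    have ht : t ∈ ⋃ s, I n s := (hA.icover n).symm ▸ Set.mem_univ t
    simpa using ht
  have hsubparent : ∀ n s t, t ∈ I n s → A (n + 1) t ⊆ A n s := fun n s t ht => by
    rw [hA.refines n s]; exact Set.subset_biUnion_of_mem ht
  -- nesting of cells
  have hnest : ∀ k n t s, A (n + k) t ⊆ A n s ∨ Disjoint (A (n + k) t) (A n s) := by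
    intro k
    induction k with
    | zero =>
      intro n t s
      rcases eq_or_ne t s with rfl | h
      · exact Or.inl subset_rfl
      · exact Or.inr (hA.disj n h)
    | succ k ih =>
      intro n t s
      obtain ⟨s', hs'⟩ := hparent (n + k) t
      have hsub : A (n + (k + 1)) t ⊆ A (n + k) s' := hsubparent (n + k) s' t hs'
      rcases ih n s' s with h | h
      · exact Or.inl (hsub.trans h)
      · exact Or.inr (h.mono_left hsub)
  -- cell measure is the sum of the measures of its children
  have hsum : ∀ P ∈ M, ∀ n s, P (A n s) = ∑' j : I n s, P (A (n + 1) j) := by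
    intro P hP n s
    rw [hA.refines n s]
    exact measure_biUnion (Set.to_countable _)
      (fun i _ j _ hij => hA.disj (n + 1) hij) (fun j _ => hmeasA0 (n + 1) j)
  have hsumR : ∀ P ∈ M, ∀ n s,
      (∑' j : I n s, (P (A (n + 1) j)).toReal) = (P (A n s)).toReal := by
    intro P hP n s
    rw [← ENNReal.tsum_toReal_eq (fun j => hfin P hP _), ← hsum P hP n s]
  have hsummable : ∀ P ∈ M, ∀ n s,
      Summable (fun j : I n s => (P (A (n + 1) j)).toReal) := by
    intro P hP n s
    exact ENNReal.summable_toReal (by rw [← hsum P hP n s]; exact hfin P hP _)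
  -- one-step conditional ratios coincide for all measures of M
  have hstep : ∀ P ∈ M, ∀ n s j, j ∈ I n s →
      (P (A (n + 1) j)).toReal / (P (A n s)).toReal
        = (Pi0 (A (n + 1) j)).toReal / (Pi0 (A n s)).toReal := by
    intro P hP n s j hj
    by_contra hne
    have hlt := lt_of_le_of_ne (hdom P hP n s j hj) hne
    set u : I n s → ℝ := fun t => (P (A (n + 1) t)).toReal / (P (A n s)).toReal with hu
    set v : I n s → ℝ := fun t => (Pi0 (A (n + 1) t)).toReal / (Pi0 (A n s)).toReal with hv
    have hu_sum : Summable u := (hsummable P hP n s).div_const _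
    have hv_sum : Summable v := (hsummable Pi0 hPi0 n s).div_const _
    have htu : ∑' t, u t = 1 := by
      rw [hu]; rw [tsum_div_const, hsumR P hP n s, div_self (hposR P hP n s).ne']
    have htv : ∑' t, v t = 1 := by
      rw [hv]; rw [tsum_div_const, hsumR Pi0 hPi0 n s, div_self (hposR Pi0 hPi0 n s).ne']
    have := Summable.tsum_lt_tsum (i := (⟨j, hj⟩ : I n s))
      (fun t => hdom P hP n s t t.2) hlt hu_sum hv_sum
    rw [htu, htv] at this
    exact lt_irrefl 1 this
  -- ratios of nested cells coincide for all measures of M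
  have hchain : ∀ P ∈ M, ∀ m s k j, A (m + k) j ⊆ A m s →
      (P (A (m + k) j)).toReal / (P (A m s)).toReal
        = (Pi0 (A (m + k) j)).toReal / (Pi0 (A m s)).toReal := by
    intro P hP m s k
    induction k with
    | zero =>
      intro j hsub
      simp only [Nat.add_zero] at hsub ⊢
      have hjs : j = s := by
        by_contra h
        obtain ⟨x, hx⟩ := hAne m j
        exact Set.disjoint_left.mp (hA.disj m h) hx (hsub hx)
      subst hjs
      rw [div_self (hposR P hP m j).ne', div_self (hposR Pi0 hPi0 m j).ne']
    | succ k ih =>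
      intro j hsub
      obtain ⟨t, ht⟩ := hparent (m + k) j
      have hsub1 : A (m + (k + 1)) j ⊆ A (m + k) t := hsubparent (m + k) t j ht
      have hts : A (m + k) t ⊆ A m s := by
        rcases hnest k m t s with h | h
        · exact h
        · exfalso
          obtain ⟨x, hx⟩ := hAne (m + (k + 1)) j
          exact Set.disjoint_left.mp h (hsub1 hx) (hsub hx)
      have h1 := hstep P hP (m + k) t j ht
      have h2 := ih t hts
      have e1 : ∀ R : Measure Ω, R ∈ M →
          (R (A (m + k + 1) j)).toReal / (R (A m s)).toReal
            = ((R (A (m + k + 1) j)).toReal / (R (A (m + k) t)).toReal)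
              * ((R (A (m + k) t)).toReal / (R (A m s)).toReal) :=
        fun R hR => (div_mul_div_cancel₀ (hposR R hR (m + k) t).ne').symm
      rw [← Nat.add_assoc m k 1]
      rw [e1 P hP, e1 Pi0 hPi0, h1, h2]
  -- key: ratios of intersections with a fixed cell coincide
  have hkey : ∀ P ∈ M, ∀ m s n j,
      (P (A n j ∩ A m s)).toReal / (P (A m s)).toReal
        = (Pi0 (A n j ∩ A m s)).toReal / (Pi0 (A m s)).toReal := by
    intro P hP m s n j
    rcases le_total m n with h | h
    · obtain ⟨k, rfl⟩ := Nat.exists_eq_add_of_le h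
      rcases hnest k m j s with hsub | hd
      · rw [Set.inter_eq_self_of_subset_left hsub]
        exact hchain P hP m s k j hsub
      · rw [Set.disjoint_iff_inter_eq_empty.mp hd]
        simp
    · obtain ⟨k, rfl⟩ := Nat.exists_eq_add_of_le h
      rcases hnest k n s j with hsub | hd
      · rw [Set.inter_eq_self_of_subset_right hsub]
        rw [div_self (hposR P hP _ _).ne', div_self (hposR Pi0 hPi0 _ _).ne']
      · rw [Set.inter_comm, Set.disjoint_iff_inter_eq_empty.mp hd]
        simp
  -- the union of all ranges of cells is a π-system generating m0
  have hC : m0 = MeasurableSpace.generateFrom (⋃ n, Set.range (A n)) := by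
    rw [← hA.gen_top]
    apply le_antisymm
    · exact iSup_le fun n => by
        rw [hA.gen n]
        exact MeasurableSpace.generateFrom_le fun B hB =>
          MeasurableSpace.measurableSet_generateFrom (Set.mem_iUnion.mpr ⟨n, hB⟩)
    · refine MeasurableSpace.generateFrom_le fun B hB => ?_
      obtain ⟨n, hB⟩ := Set.mem_iUnion.mp hB
      refine (le_iSup (fun n => (ℱ n : MeasurableSpace Ω)) n) _ ?_
      rw [hA.gen n]
      exact MeasurableSpace.measurableSet_generateFrom hB
  have hpi : IsPiSystem (⋃ n, Set.range (A n)) := by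
    rintro B1 hB1 B2 hB2 hne
    simp only [Set.mem_iUnion, Set.mem_range] at hB1 hB2
    obtain ⟨n, j, rfl⟩ := hB1
    obtain ⟨l, t, rfl⟩ := hB2
    rcases le_total n l with h | h
    · obtain ⟨k, rfl⟩ := Nat.exists_eq_add_of_le h
      rcases hnest k n t j with hsub | hd
      · rw [Set.inter_eq_self_of_subset_right hsub]
        exact Set.mem_iUnion.mpr ⟨n + k, t, rfl⟩
      · exact absurd (Set.disjoint_iff_inter_eq_empty.mp (hd.symm)) hne.ne_empty
    · obtain ⟨k, rfl⟩ := Nat.exists_eq_add_of_le h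
      rcases hnest k l j t with hsub | hd
      · rw [Set.inter_eq_self_of_subset_left hsub]
        exact Set.mem_iUnion.mpr ⟨l + k, j, rfl⟩
      · exact absurd (Set.disjoint_iff_inter_eq_empty.mp hd) hne.ne_empty
  -- normalized conditional measures on a cell coincide
  have hmeq : ∀ P ∈ M, ∀ m s,
      (P (A m s))⁻¹ • P.restrict (A m s) = (Pi0 (A m s))⁻¹ • Pi0.restrict (A m s) := by
    intro P hP m s
    have happ : ∀ R : Measure Ω, ∀ B : Set Ω, MeasurableSet B →
        ((R (A m s))⁻¹ • R.restrict (A m s)) B = (R (A m s))⁻¹ * R (B ∩ A m s) := by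
      intro R B hB
      rw [Measure.smul_apply, Measure.restrict_apply hB, smul_eq_mul]
    have hone : ∀ R : Measure Ω, R ∈ M →
        ((R (A m s))⁻¹ • R.restrict (A m s)) Set.univ = 1 := by
      intro R hR
      rw [happ R _ MeasurableSet.univ, Set.univ_inter,
        ENNReal.inv_mul_cancel (hpos R hR m s).ne' (hfin R hR _)]
    haveI : IsFiniteMeasure ((P (A m s))⁻¹ • P.restrict (A m s)) :=
      ⟨by rw [hone P hP]; exact ENNReal.one_lt_top⟩
    refine ext_of_generate_finite _ hC hpi ?_ (by rw [hone P hP, hone Pi0 hPi0])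
    rintro B hB
    simp only [Set.mem_iUnion, Set.mem_range] at hB
    obtain ⟨n, j, rfl⟩ := hB
    rw [happ P _ (hmeasA0 n j), happ Pi0 _ (hmeasA0 n j)]
    have hfin1 : ∀ R : Measure Ω, R ∈ M → (R (A m s))⁻¹ * R (A n j ∩ A m s) ≠ ∞ :=
      fun R hR => ENNReal.mul_ne_top (ENNReal.inv_ne_top.mpr (hpos R hR m s).ne')
        (hfin R hR _)
    rw [← ENNReal.toReal_eq_toReal_iff' (hfin1 P hP) (hfin1 Pi0 hPi0),
      ENNReal.toReal_mul, ENNReal.toReal_mul, ENNReal.toReal_inv, ENNReal.toReal_inv,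
      inv_mul_eq_div, inv_mul_eq_div]
    exact hkey P hP m s n j
  -- normalized cell integrals of ξ coincide
  have hint : ∀ P ∈ M, ∀ m s,
      (∫ ω in A m s, ξ ω ∂P) / (P (A m s)).toReal
        = (∫ ω in A m s, ξ ω ∂Pi0) / (Pi0 (A m s)).toReal := by
    intro P hP m s
    have h1 : ∀ R : Measure Ω, R ∈ M →
        (∫ ω in A m s, ξ ω ∂(R)) / (R (A m s)).toReal
          = ∫ ω, ξ ω ∂((R (A m s))⁻¹ • R.restrict (A m s)) := by
      intro R hR
      rw [integral_smul_measure, ENNReal.toReal_inv, smul_eq_mul, inv_mul_eq_div]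
    rw [h1 P hP, h1 Pi0 hPi0, hmeq P hP m s]
  -- every ℱ m-measurable set is a union of cells
  have hunion : ∀ m (B : Set Ω), MeasurableSet[ℱ m] B → ∃ S : Set ℕ, B = ⋃ s ∈ S, A m s := by
    intro m B hB
    rw [hA.gen m] at hB
    induction hB with
    | basic u hu =>
      obtain ⟨s, rfl⟩ := hu
      exact ⟨{s}, by simp⟩
    | empty => exact ⟨∅, by simp⟩
    | compl u hu ih =>
      obtain ⟨S, rfl⟩ := ih
      refine ⟨Sᶜ, ?_⟩
      ext ω
      have hcell : ∃ t, ω ∈ A m t := by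
        have : ω ∈ ⋃ s, A m s := (hA.cover m).symm ▸ Set.mem_univ ω
        simpa using this
      obtain ⟨t, ht⟩ := hcell
      simp only [Set.mem_compl_iff, Set.mem_iUnion, exists_prop]
      constructor
      · intro h
        refine ⟨t, ?_, ht⟩
        intro htS
        exact h ⟨t, htS, ht⟩
      · rintro ⟨s, hsS, hω⟩ ⟨s', hs'S, hω'⟩
        have hss : s = s' := by
          by_contra hne'
          exact Set.disjoint_left.mp (hA.disj m hne') hω hω'
        exact hsS (hss ▸ hs'S)
    | iUnion f hf ih =>
      choose S hS using ih
      refine ⟨⋃ i, S i, ?_⟩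
      rw [Set.biUnion_iUnion]
      exact Set.iUnion_congr hS
  -- any ℱ m-strongly-measurable function is constant on each cell
  have hconst : ∀ m (g : Ω → ℝ), StronglyMeasurable[ℱ m] g →
      ∀ s, ∀ ω ∈ A m s, ∀ ω' ∈ A m s, g ω = g ω' := by
    intro m g hg s ω hω ω' hω'
    have hmg : MeasurableSet[ℱ m] (g ⁻¹' {g ω}) :=
      hg.measurable (measurableSet_singleton _)
    obtain ⟨S, hS⟩ := hunion m _ hmg
    have hωin : ω ∈ g ⁻¹' {g ω} := rfl
    rw [hS] at hωin
    simp only [Set.mem_iUnion, exists_prop] at hωin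
    obtain ⟨t, htS, hωt⟩ := hωin
    have hts : t = s := by
      by_contra hne'
      exact Set.disjoint_left.mp (hA.disj m hne') hωt hω
    subst hts
    have hin : ω' ∈ g ⁻¹' {g ω} := by
      rw [hS]; exact Set.mem_biUnion htS hω'
    simpa [eq_comm] using hin
  -- value of the conditional expectation on a cell
  have hval : ∀ P ∈ M, ∀ m s, ∀ ω ∈ A m s,
      (P[ξ | ℱ m]) ω = (∫ x in A m s, ξ x ∂P) / (P (A m s)).toReal := by
    intro P hP m s ω hω
    haveI := hM_prob P hP
    have hset : ∫ x in A m s, (P[ξ | ℱ m]) x ∂P = ∫ x in A m s, ξ x ∂P :=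
      setIntegral_condExp (ℱ.le m) (hξ_int P hP) (hmeasA m s)
    have hcg : ∀ x ∈ A m s, (P[ξ | ℱ m]) x = (P[ξ | ℱ m]) ω :=
      fun x hx => hconst m _ stronglyMeasurable_condExp s x hx ω hω
    have hconstint : ∫ x in A m s, (P[ξ | ℱ m]) x ∂P
        = (P (A m s)).toReal * (P[ξ | ℱ m]) ω := by
      rw [setIntegral_congr_fun (hmeasA0 m s) hcg, setIntegral_const, smul_eq_mul, measureReal_def]
    rw [hconstint] at hset
    field_simp [(hposR P hP m s).ne']
    linarith [hset]
  -- the conditional expectations coincide (everywhere!)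
  have hcond : ∀ P ∈ M, ∀ Q ∈ M, ∀ m, (P[ξ | ℱ m]) = (Q[ξ | ℱ m]) := by
    intro P hP Q hQ m
    funext ω
    have hcell : ∃ s, ω ∈ A m s := by
      have : ω ∈ ⋃ s, A m s := (hA.cover m).symm ▸ Set.mem_univ ω
      simpa using this
    obtain ⟨s, hs⟩ := hcell
    rw [hval P hP m s ω hs, hval Q hQ m s ω hs, hint P hP m s, hint Q hQ m s]
  -- sigma-finiteness of trimmed measures
  have htrim : ∀ P ∈ M, ∀ m, SigmaFinite (P.trim (ℱ.le m)) := by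
    intro P hP m
    haveI := hM_prob P hP
    infer_instance
  refine ⟨?_, ?_, ?_⟩
  · intro P hP Q hQ R hR m
    rw [hcond P hP Q hQ m]
  · intro P hP Q hQ m
    haveI := htrim Q hQ (m + 1)
    rw [hcond P hP Q hQ (m + 1), hcond P hP Q hQ m]
    exact condExp_condExp_of_le (ℱ.mono (Nat.le_succ m)) (ℱ.le (m + 1))
  · intro P hP
    refine ⟨fun m => P[ξ | ℱ m], fun _ _ => 0, ?_, ?_, fun ω => rfl,
      fun ω => monotone_const, ?_⟩
    · intro Q hQ
      refine ⟨fun m => stronglyMeasurable_condExp, fun i j hij => ?_⟩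
      haveI := htrim Q hQ j
      simp only [hcond P hP Q hQ j, hcond P hP Q hQ i]
      exact condExp_condExp_of_le (ℱ.mono hij) (ℱ.le j)
    · exact fun m => measurable_const
    · intro Q hQ m
      simp only [sub_zero]
      exact Filter.EventuallyEq.rfl
end

section
/- Let the filtration (𝓕_n)_{n∈ℕ} on (Ω, 𝓕) satisfy condition A, and let M be a convex set of mutually equivalent probability measures such that P(A_s^n) > 0 for all P ∈ M, s, n, and there exists a measure P_{i₀} ∈ M with P(A_j^{n+1})/P(A_s^n) ≤ P_{i₀}(A_j^{n+1})/P_{i₀}(A_s^n) for all P ∈ M, all n, all s and all j ∈ I_s^n. Let ξ ∈ G₀ = {ξ ≥ 0 : E^P ξ = 1 for all P ∈ M}, and let (f_m) be an adapted process with f_m ≤ f_{m−1} a.s. and E^P[ξ |f_m|] < ∞ for all m ≥ 1 and P ∈ M. Then the process (f_m E^P[ξ | 𝓕_m])_{m∈ℕ} is a local regular supermartingale relative to M; explicitly, setting ḡ⁰_m = (f_{m−1} − f_m) E^P[ξ | 𝓕_m] ≥ 0, the process f_m E^P[ξ | 𝓕_m] + Σ_{i=1}^m ḡ⁰_i is a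 martingale relative to every measure in M. -/
open MeasureTheory Filter Set
open scoped ENNReal

section Aux

/-- Every set measurable w.r.t. the σ-algebra generated by a countable partition is a
union of partition cells. -/
lemma stmt17_aux_union {Ω : Type*} (A : ℕ → Set Ω)
    (hd : Pairwise (Function.onFun Disjoint A)) (hc : (⋃ s, A s) = Set.univ)
    {B : Set Ω} (hB : MeasurableSet[MeasurableSpace.generateFrom (Set.range A)] B) :
    ∃ T : Set ℕ, B = ⋃ s ∈ T, A s := by
  let 𝔖 : MeasurableSpace Ω :=
    { MeasurableSet' := fun B => ∃ T : Set ℕ, B = ⋃ s ∈ T, A s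
      measurableSet_empty := ⟨∅, by simp⟩
      measurableSet_compl := by
        rintro B ⟨T, rfl⟩
        refine ⟨Tᶜ, ?_⟩
        ext ω
        constructor
        · intro hω
          simp only [Set.mem_compl_iff, Set.mem_iUnion] at hω ⊢
          have : ω ∈ ⋃ s, A s := by rw [hc]; trivial
          obtain ⟨s, hs⟩ := Set.mem_iUnion.1 this
          refine ⟨s, fun hsT => hω ⟨s, hsT, hs⟩, hs⟩
        · rintro hω
          simp only [Set.mem_iUnion] at hω
          obtain ⟨s, hsT, hs⟩ := hω
          simp only [Set.mem_compl_iff, Set.mem_iUnion]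
          rintro ⟨t, htT, ht⟩
          have hst : s = t := by
            by_contra hne
            exact (Set.disjoint_left.1 (hd hne)) hs ht
          exact hsT (hst ▸ htT)
      measurableSet_iUnion := by
        intro g hg
        choose T hT using hg
        refine ⟨⋃ i, T i, ?_⟩
        rw [Set.biUnion_iUnion]
        exact Set.iUnion_congr hT }
  have hle : MeasurableSpace.generateFrom (Set.range A) ≤ 𝔖 := by
    refine MeasurableSpace.generateFrom_le ?_
    rintro _ ⟨s, rfl⟩
    exact ⟨{s}, by simp⟩
  exact hle _ hB

/-- A function strongly measurable w.r.t. the σ-algebra generated by a countable partition is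
constant on each cell. -/
lemma stmt17_aux_const {Ω : Type*} (A : ℕ → Set Ω)
    (hd : Pairwise (Function.onFun Disjoint A)) (hc : (⋃ s, A s) = Set.univ)
    {u : Ω → ℝ} (hu : StronglyMeasurable[MeasurableSpace.generateFrom (Set.range A)] u)
    {s : ℕ} {ω ω' : Ω} (hω : ω ∈ A s) (hω' : ω' ∈ A s) : u ω = u ω' := by
  have hB : MeasurableSet[MeasurableSpace.generateFrom (Set.range A)] (u ⁻¹' {u ω}) :=
    hu.measurable (measurableSet_singleton _)
  obtain ⟨T, hT⟩ := stmt17_aux_union A hd hc hB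
  have hωB : ω ∈ u ⁻¹' {u ω} := rfl
  rw [hT] at hωB
  obtain ⟨t, htT, ht⟩ := Set.mem_iUnion₂.1 hωB
  have hst : t = s := by
    by_contra hne
    exact (Set.disjoint_left.1 (hd hne)) ht hω
  subst hst
  have : ω' ∈ u ⁻¹' {u ω} := by rw [hT]; exact Set.mem_iUnion₂.2 ⟨t, htT, hω'⟩
  exact (this : u ω' = u ω).symm

/-- If termwise `f ≤ g`, both summable with equal sums, then `f = g`. -/
lemma stmt17_aux_tsum {ι : Type*} {f g : ι → ℝ} (hle : ∀ i, f i ≤ g i)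
    (hf : Summable f) (hg : Summable g) (h : ∑' i, f i = ∑' i, g i) : ∀ i, f i = g i := by
  intro i
  by_contra hne
  have hi : f i < g i := lt_of_le_of_ne (hle i) hne
  exact absurd h (ne_of_lt (Summable.tsum_lt_tsum hle hi hf hg))

end Aux

/-- **Theorem `mmars1` of the paper.**
Under condition A, for a convex set `M` of mutually equivalent probability measures
charging all partition cells and dominated on cells by some `P i₀ ∈ M`, for
`ξ ∈ G₀ = {ξ ≥ 0 : E^P ξ = 1, P ∈ M}` and an adapted a.s. non-increasing process
`f` with `E^P (ξ |f m|) < ∞`, the process `(f m ⬝ E^P[ξ | ℱ m])_m` is a local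
regular supermartingale relative to `M` : setting
`ḡ m = (f (m-1) - f m) E^P[ξ | ℱ m] ≥ 0`, the process
`f m ⬝ E^P[ξ | ℱ m] + ∑_{i=1}^m ḡ i` is a martingale relative to every measure in `M`. -/
theorem stmt17 {Ω : Type*} {m0 : MeasurableSpace Ω}
    (ℱ : Filtration ℕ m0) (A : ℕ → ℕ → Set Ω) (I : ℕ → ℕ → Set ℕ)
    (hA : CondA m0 ℱ A I)
    (M : Set (Measure Ω)) (hMne : M.Nonempty)
    (hM_prob : ∀ P ∈ M, IsProbabilityMeasure P)
    (hM_conv : ∀ P ∈ M, ∀ Q ∈ M, ∀ α : ℝ, 0 ≤ α → α ≤ 1 →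
      (ENNReal.ofReal (1 - α)) • P + (ENNReal.ofReal α) • Q ∈ M)
    (hM_equiv : ∀ P ∈ M, ∀ Q ∈ M, P ≪ Q)
    (hpos : ∀ P ∈ M, ∀ n s : ℕ, 0 < P (A n s))
    (Pi0 : Measure Ω) (hPi0 : Pi0 ∈ M)
    (hdom : ∀ P ∈ M, ∀ n s j : ℕ, j ∈ I n s →
      (P (A (n + 1) j)).toReal / (P (A n s)).toReal ≤
      (Pi0 (A (n + 1) j)).toReal / (Pi0 (A n s)).toReal)
    (ξ : Ω → ℝ) (hξ_nonneg : ∀ ω, 0 ≤ ξ ω)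
    (hξ_int : ∀ P ∈ M, Integrable ξ P)
    (hξ_exp : ∀ P ∈ M, ∫ ω, ξ ω ∂P = 1)
    (f : ℕ → Ω → ℝ) (hf_adapted : Adapted ℱ f)
    (hf_dec : ∀ P ∈ M, ∀ m : ℕ, f (m + 1) ≤ᵐ[P] f m)
    (hfξ_int : ∀ P ∈ M, ∀ m : ℕ, Integrable (fun ω => ξ ω * |f m ω|) P) :
    ∀ P ∈ M,
      (∀ Q ∈ M, ∀ m : ℕ, ∀ᵐ ω ∂Q,
        0 ≤ (f m ω - f (m + 1) ω) * (P[ξ | ℱ (m + 1)]) ω) ∧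
      (∀ Q ∈ M, ∀ m : ℕ,
        (Q[(fun ω => f (m + 1) ω * (P[ξ | ℱ (m + 1)]) ω +
            ∑ i ∈ Finset.range (m + 1),
              (f i ω - f (i + 1) ω) * (P[ξ | ℱ (i + 1)]) ω) | ℱ m]) =ᵐ[Q]
        fun ω => f m ω * (P[ξ | ℱ m]) ω +
          ∑ i ∈ Finset.range m, (f i ω - f (i + 1) ω) * (P[ξ | ℱ (i + 1)]) ω) ∧
      (∃ Mart g : ℕ → Ω → ℝ,
        (∀ Q ∈ M, Martingale Mart ℱ Q) ∧
        Adapted ℱ g ∧ (∀ ω, g 0 ω = 0) ∧ (∀ ω, Monotone fun m => g m ω) ∧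
        ∀ Q ∈ M, ∀ m : ℕ,
          (fun ω => f m ω * (P[ξ | ℱ m]) ω) =ᵐ[Q] fun ω => Mart m ω - g m ω) := by
    classical
  -- basic measurability facts
  have hle : ∀ n, (ℱ n : MeasurableSpace Ω) ≤ m0 := fun n => ℱ.le n
  have measA : ∀ n s, MeasurableSet[ℱ n] (A n s) := fun n s => by
    rw [hA.gen n]; exact MeasurableSpace.measurableSet_generateFrom ⟨s, rfl⟩
  have measA0 : ∀ n s, MeasurableSet (A n s) := fun n s => hle n _ (measA n s)
  have mem_cell : ∀ n (ω : Ω), ∃ s, ω ∈ A n s := fun n ω => by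
    have : ω ∈ ⋃ s, A n s := by rw [hA.cover n]; trivial
    exact Set.mem_iUnion.1 this
  have cell_unique : ∀ n (s t : ℕ) (ω : Ω), ω ∈ A n s → ω ∈ A n t → s = t := by
    intro n s t ω hs ht
    by_contra hne
    exact (Set.disjoint_left.1 (hA.disj n hne)) hs ht
  have cell_ne : ∀ n s, (A n s).Nonempty := fun n s =>
    nonempty_of_measure_ne_zero (μ := Pi0) (hpos Pi0 hPi0 n s).ne'
  -- parent and root
  have hparent : ∀ n j, ∃ s, j ∈ I n s := fun n j => by
    have : j ∈ ⋃ s, I n s := by rw [hA.icover n]; trivial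
    exact Set.mem_iUnion.1 this
  choose par hpar using hparent
  have sub_par : ∀ n j, A (n + 1) j ⊆ A n (par n j) := fun n j => by
    rw [hA.refines n (par n j)]
    exact Set.subset_biUnion_of_mem (hpar n j)
  have hanc : ∀ (k n t : ℕ), ∃ s', A (n + k) t ⊆ A n s' := by
    intro k
    induction k with
    | zero => exact fun n t => ⟨t, subset_rfl⟩
    | succ k ih =>
      intro n t
      obtain ⟨s', hs'⟩ := ih (n + 1) t
      have hcast : n + (k + 1) = (n + 1) + k := by omega
      exact ⟨par n s', by rw [hcast]; exact hs'.trans (sub_par n s')⟩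
  have hrootex : ∀ n t, ∃ r, A n t ⊆ A 0 r := by
    intro n
    induction n with
    | zero => exact fun t => ⟨t, subset_rfl⟩
    | succ n ih =>
      intro t
      obtain ⟨r, hr⟩ := ih (par n t)
      exact ⟨r, (sub_par n t).trans hr⟩
  choose root hroot using hrootex
  have root_unique : ∀ n t r, A n t ⊆ A 0 r → r = root n t := by
    intro n t r hr
    obtain ⟨ω, hω⟩ := cell_ne n t
    exact cell_unique 0 r (root n t) ω (hr hω) (hroot n t hω)
  have root_zero : ∀ t, root 0 t = t := fun t => (root_unique 0 t t subset_rfl).symm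
  have root_succ : ∀ n t, root (n + 1) t = root n (par n t) := fun n t =>
    (root_unique (n + 1) t (root n (par n t)) ((sub_par n t).trans (hroot n (par n t)))).symm
  -- positivity facts
  have posR : ∀ P ∈ M, ∀ n s, 0 < (P (A n s)).toReal := by
    intro P hP n s
    haveI := hM_prob P hP
    exact ENNReal.toReal_pos (hpos P hP n s).ne' (measure_ne_top P _)
  have finR : ∀ P ∈ M, ∀ n s, (P (A n s)) ≠ ⊤ := by
    intro P hP n s; haveI := hM_prob P hP; exact measure_ne_top P _
  -- sum of subcell measures
  have hsumcell : ∀ P ∈ M, ∀ n s, (∑' j : I n s, P (A (n + 1) j)) = P (A n s) := by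
    intro P hP n s
    rw [hA.refines n s, measure_biUnion (Set.to_countable _) ?_ (fun j _ => measA0 (n + 1) j)]
    intro i hi j hj hne
    exact hA.disj (n + 1) hne
  -- ratio equality versus Pi0
  have RL : ∀ Q ∈ M, ∀ n s j, j ∈ I n s →
      (Q (A (n + 1) j)).toReal * (Pi0 (A n s)).toReal
        = (Pi0 (A (n + 1) j)).toReal * (Q (A n s)).toReal := by
    intro Q hQ n s j hj
    have key : ∀ R ∈ M, Summable (fun j : I n s => (R (A (n + 1) j)).toReal) ∧
        (∑' j : I n s, (R (A (n + 1) j)).toReal) = (R (A n s)).toReal := by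
      intro R hR
      have h1 : (∑' j : I n s, R (A (n + 1) j)) ≠ ⊤ := by
        rw [hsumcell R hR n s]; exact finR R hR n s
      refine ⟨ENNReal.summable_toReal h1, ?_⟩
      rw [← ENNReal.tsum_toReal_eq (fun j : I n s => finR R hR (n + 1) j), hsumcell R hR n s]
    obtain ⟨hQsum, hQts⟩ := key Q hQ
    obtain ⟨hPsum, hPts⟩ := key Pi0 hPi0
    set F : I n s → ℝ := fun j => (Q (A (n + 1) j)).toReal / (Q (A n s)).toReal with hF
    set G : I n s → ℝ := fun j => (Pi0 (A (n + 1) j)).toReal / (Pi0 (A n s)).toReal with hG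
    have hFsum : Summable F := hQsum.div_const _
    have hGsum : Summable G := hPsum.div_const _
    have hFts : ∑' j, F j = 1 := by
      rw [hF]; rw [tsum_div_const, hQts, div_self (posR Q hQ n s).ne']
    have hGts : ∑' j, G j = 1 := by
      rw [hG]; rw [tsum_div_const, hPts, div_self (posR Pi0 hPi0 n s).ne']
    have hFG : ∀ j : I n s, F j ≤ G j := fun j => hdom Q hQ n s j j.2
    have heq := stmt17_aux_tsum hFG hFsum hGsum (hFts.trans hGts.symm) ⟨j, hj⟩
    have : (Q (A (n + 1) j)).toReal / (Q (A n s)).toReal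
        = (Pi0 (A (n + 1) j)).toReal / (Pi0 (A n s)).toReal := heq
    exact (div_eq_div_iff (posR Q hQ n s).ne' (posR Pi0 hPi0 n s).ne').1 this
  -- cross ratio between two measures in M
  have PQcross : ∀ P ∈ M, ∀ Q ∈ M, ∀ n s j, j ∈ I n s →
      (Q (A (n + 1) j)).toReal * (P (A n s)).toReal
        = (P (A (n + 1) j)).toReal * (Q (A n s)).toReal := by
    intro P hP Q hQ n s j hj
    have h1 := RL Q hQ n s j hj
    have h2 := RL P hP n s j hj
    have hPis : (Pi0 (A n s)).toReal ≠ 0 := (posR Pi0 hPi0 n s).ne'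
    rw [← mul_left_inj' hPis]
    linear_combination (P (A n s)).toReal * h1 - (Q (A n s)).toReal * h2
  -- ratio to the root
  have DD : ∀ P ∈ M, ∀ Q ∈ M, ∀ n t,
      (Q (A n t)).toReal * (P (A 0 (root n t))).toReal
        = (P (A n t)).toReal * (Q (A 0 (root n t))).toReal := by
    intro P hP Q hQ n
    induction n with
    | zero => intro t; rw [root_zero t]; ring
    | succ n ih =>
      intro t
      have hcross := PQcross P hP Q hQ n (par n t) t (hpar n t)
      have hih := ih (par n t)
      rw [root_succ n t]
      have hPs : (P (A n (par n t))).toReal ≠ 0 := (posR P hP n (par n t)).ne'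
      rw [← mul_left_inj' hPs]
      linear_combination (P (A 0 (root n (par n t)))).toReal * hcross
        + (P (A (n + 1) t)).toReal * hih
  -- the index of the level-0 cell containing a point
  have hr0ex : ∀ ω : Ω, ∃ s, ω ∈ A 0 s := mem_cell 0
  choose r0 hr0 using hr0ex
  have r0_eq : ∀ (ω : Ω) (s : ℕ), ω ∈ A 0 s → r0 ω = s := fun ω s hs =>
    cell_unique 0 (r0 ω) s ω (hr0 ω) hs
  have hr0meas : Measurable r0 := by
    apply measurable_to_countable'
    intro s
    have : r0 ⁻¹' {s} = A 0 s := by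
      ext ω
      constructor
      · intro h; have : r0 ω = s := h; rw [← this]; exact hr0 ω
      · intro h; exact r0_eq ω s h
    rw [this]; exact measA0 0 s
  -- transfer of measures and integrals between two elements of M
  have TRANS : ∀ P ∈ M, ∀ Q ∈ M, ∀ n t, ∃ ρ : ℝ, 0 < ρ ∧
      (Q (A n t)).toReal = ρ * (P (A n t)).toReal ∧
      (∫ ω in A n t, ξ ω ∂Q) = ρ * ∫ ω in A n t, ξ ω ∂P := by
    intro P hP Q hQ n t
    haveI := hM_prob P hP
    haveI := hM_prob Q hQ
    set ρ : ℕ → ℝ≥0∞ := fun s => Q (A 0 s) / P (A 0 s) with hρ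
    have hρ_top : ∀ s, ρ s ≠ ⊤ := fun s =>
      (ENNReal.div_lt_top (finR Q hQ 0 s) (hpos P hP 0 s).ne').ne
    have hρ_toReal : ∀ s, (ρ s).toReal = (Q (A 0 s)).toReal / (P (A 0 s)).toReal := fun s =>
      ENNReal.toReal_div _ _
    have hρ_pos : ∀ s, 0 < (ρ s).toReal := fun s => by
      rw [hρ_toReal s]; exact div_pos (posR Q hQ 0 s) (posR P hP 0 s)
    set w : Ω → ℝ≥0∞ := fun ω => ρ (r0 ω) with hw
    have hw_meas : Measurable w := by
      have : w = ρ ∘ r0 := rfl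
      rw [this]; exact measurable_from_top.comp hr0meas
    set ν : Measure Ω := P.withDensity w with hν
    -- value of Q on cells
    have cellQ : ∀ n t, Q (A n t) = ρ (root n t) * P (A n t) := by
      intro n t
      have hfin : ρ (root n t) * P (A n t) ≠ ⊤ :=
        ENNReal.mul_ne_top (hρ_top _) (finR P hP n t)
      rw [← ENNReal.toReal_eq_toReal_iff' (finR Q hQ n t) hfin, ENNReal.toReal_mul, hρ_toReal]
      have hDD := DD P hP Q hQ n t
      have hPr : (P (A 0 (root n t))).toReal ≠ 0 := (posR P hP 0 (root n t)).ne'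
      field_simp
      linear_combination hDD
    -- value of ν on cells
    have cellν : ∀ n t, ν (A n t) = ρ (root n t) * P (A n t) := by
      intro n t
      rw [hν, withDensity_apply w (measA0 n t)]
      have : ∀ᵐ ω ∂P, ω ∈ A n t → w ω = ρ (root n t) := by
        refine Filter.Eventually.of_forall fun ω hω => ?_
        rw [hw]; simp only
        rw [r0_eq ω (root n t) (hroot n t hω)]
      rw [setLIntegral_congr_fun_ae (measA0 n t) this, setLIntegral_const]
    -- Q = ν
    have hQν : Q = ν := by
      have hgen : MeasurableSpace.generateFrom {B : Set Ω | ∃ n t, B = A n t} = m0 := by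
        refine le_antisymm (MeasurableSpace.generateFrom_le ?_) ?_
        · rintro _ ⟨n, t, rfl⟩; exact measA0 n t
        · rw [← hA.gen_top]
          refine iSup_le fun n => ?_
          rw [hA.gen n]
          exact MeasurableSpace.generateFrom_mono (by rintro _ ⟨s, rfl⟩; exact ⟨n, s, rfl⟩)
      have haux : ∀ n m s t, n ≤ m → (A n s ∩ A m t).Nonempty → A n s ∩ A m t = A m t := by
        intro n m s t hnm ⟨ω, hωs, hωt⟩
        obtain ⟨k, rfl⟩ := Nat.exists_eq_add_of_le hnm
        obtain ⟨s', hs'⟩ := hanc k n t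
        have : s' = s := cell_unique n s' s ω (hs' hωt) hωs
        subst this
        exact Set.inter_eq_self_of_subset_right hs'
      have hpi : IsPiSystem {B : Set Ω | ∃ n t, B = A n t} := by
        rintro B1 ⟨n, s, rfl⟩ B2 ⟨m, t, rfl⟩ hne
        rcases le_total n m with h | h
        · rw [haux n m s t h hne]; exact ⟨m, t, rfl⟩
        · rw [Set.inter_comm] at hne ⊢
          rw [haux m n t s h hne]; exact ⟨n, s, rfl⟩
      refine ext_of_generate_finite _ hgen.symm hpi ?_ ?_
      · rintro _ ⟨n, t, rfl⟩; rw [cellQ n t, cellν n t]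
      · rw [← hA.cover 0, measure_iUnion (hA.disj 0) (measA0 0),
          measure_iUnion (hA.disj 0) (measA0 0)]
        exact tsum_congr fun s => by rw [cellQ 0 s, cellν 0 s]
    refine ⟨(ρ (root n t)).toReal, hρ_pos _, ?_, ?_⟩
    · rw [cellQ n t, ENNReal.toReal_mul]
    · have hres : Q.restrict (A n t) = (ρ (root n t)) • (P.restrict (A n t)) := by
        rw [hQν, hν, restrict_withDensity (measA0 n t)]
        have : w =ᵐ[P.restrict (A n t)] fun _ => ρ (root n t) := by
          refine (ae_restrict_iff' (measA0 n t)).2 (Filter.Eventually.of_forall fun ω hω => ?_)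
          rw [hw]; simp only
          rw [r0_eq ω (root n t) (hroot n t hω)]
        rw [withDensity_congr_ae this, withDensity_const]
      rw [show (∫ ω in A n t, ξ ω ∂Q) = ∫ ω, ξ ω ∂(Q.restrict (A n t)) from rfl, hres,
        integral_smul_measure]
      rfl
  -- Theorem 9 : the conditional expectation does not depend on the measure
  have T9 : ∀ P ∈ M, ∀ Q ∈ M, ∀ n, (P[ξ | ℱ n]) = (Q[ξ | ℱ n]) := by
    intro P hP Q hQ n
    haveI := hM_prob P hP
    haveI := hM_prob Q hQ
    have const_of : ∀ (R : Measure Ω), ∀ {s : ℕ} {ω ω' : Ω}, ω ∈ A n s → ω' ∈ A n s →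
        (R[ξ | ℱ n]) ω = (R[ξ | ℱ n]) ω' := by
      intro R s ω ω' hω hω'
      have hsm : StronglyMeasurable[MeasurableSpace.generateFrom (Set.range (A n))]
          (R[ξ | ℱ n]) := hA.gen n ▸ (stronglyMeasurable_condExp (m := ℱ n))
      exact stmt17_aux_const (A n) (hA.disj n) (hA.cover n) hsm hω hω'
    funext ω
    obtain ⟨s, hω⟩ := mem_cell n ω
    obtain ⟨ρ, hρ_pos, hρ_meas, hρ_int⟩ := TRANS P hP Q hQ n s
    have keyR : ∀ R ∈ M, (R (A n s)).toReal * (R[ξ | ℱ n]) ω = ∫ x in A n s, ξ x ∂ R := by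
      intro R hR
      haveI := hM_prob R hR
      have h1 : ∫ x in A n s, (R[ξ | ℱ n]) x ∂ R = ∫ x in A n s, ξ x ∂ R :=
        setIntegral_condExp (hle n) (hξ_int R hR) (measA n s)
      have h2 : ∫ x in A n s, (R[ξ | ℱ n]) x ∂ R
          = (R (A n s)).toReal • ((R[ξ | ℱ n]) ω) := by
        rw [setIntegral_congr_fun (measA0 n s) (fun x hx => const_of R hx hω),
          setIntegral_const]
        rfl
      rw [← h1, h2, smul_eq_mul]
    have hPkey := keyR P hP
    have hQkey := keyR Q hQ
    rw [hρ_meas, hρ_int, ← hPkey] at hQkey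
    have hPs : (P (A n s)).toReal ≠ 0 := (posR P hP n s).ne'
    have hcancel : (ρ * (P (A n s)).toReal) * (Q[ξ | ℱ n]) ω
        = (ρ * (P (A n s)).toReal) * (P[ξ | ℱ n]) ω := by ring_nf; linarith [hQkey]
    exact (mul_left_cancel₀ (mul_ne_zero hρ_pos.ne' hPs) hcancel).symm
  -- main part
  intro P hP
  haveI := hM_prob P hP
  -- nonnegativity of condexp
  have Xnn : ∀ Q ∈ M, ∀ n, (0 : Ω → ℝ) ≤ᵐ[Q] (P[ξ | ℱ n]) := by
    intro Q hQ n
    rw [T9 P hP Q hQ n]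
    exact condExp_nonneg (Filter.Eventually.of_forall hξ_nonneg)
  have part1 : ∀ Q ∈ M, ∀ m : ℕ, ∀ᵐ ω ∂Q,
      0 ≤ (f m ω - f (m + 1) ω) * (P[ξ | ℱ (m + 1)]) ω := by
    intro Q hQ m
    filter_upwards [hf_dec Q hQ m, Xnn Q hQ (m + 1)] with ω h1 h2
    exact mul_nonneg (sub_nonneg.2 h1) h2
  -- integrability facts
  have hInt_fξ : ∀ Q ∈ M, ∀ i, Integrable (fun ω => f i ω * ξ ω) Q := by
    intro Q hQ i
    haveI := hM_prob Q hQ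
    refine Integrable.mono' (hfξ_int Q hQ i)
      ((((hf_adapted i).stronglyMeasurable.mono (hle i)).aestronglyMeasurable).mul
        (hξ_int Q hQ).aestronglyMeasurable) ?_
    refine Filter.Eventually.of_forall fun ω => ?_
    rw [Real.norm_eq_abs, abs_mul, abs_of_nonneg (hξ_nonneg ω), mul_comm]
  have pullij : ∀ Q ∈ M, ∀ i j, i ≤ j →
      (Q[(fun ω => f i ω * ξ ω) | ℱ j]) =ᵐ[Q] fun ω => f i ω * (P[ξ | ℱ j]) ω := by
    intro Q hQ i j hij
    haveI := hM_prob Q hQ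
    rw [T9 P hP Q hQ j]
    have hsm : StronglyMeasurable[ℱ j] (f i) := (hf_adapted i).stronglyMeasurable.mono (ℱ.mono hij)
    exact condExp_mul_of_stronglyMeasurable_left hsm (hInt_fξ Q hQ i) (hξ_int Q hQ)
  have hIntfX : ∀ Q ∈ M, ∀ i j, i ≤ j →
      Integrable (fun ω => f i ω * (P[ξ | ℱ j]) ω) Q := by
    intro Q hQ i j hij
    haveI := hM_prob Q hQ
    exact (integrable_condExp).congr (pullij Q hQ i j hij)
  have hsummand : ∀ Q ∈ M, ∀ i, Integrable
      (fun ω => (f i ω - f (i + 1) ω) * (P[ξ | ℱ (i + 1)]) ω) Q := by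
    intro Q hQ i
    have : (fun ω => (f i ω - f (i + 1) ω) * (P[ξ | ℱ (i + 1)]) ω)
        = fun ω => f i ω * (P[ξ | ℱ (i + 1)]) ω - f (i + 1) ω * (P[ξ | ℱ (i + 1)]) ω := by
      funext ω; ring
    rw [this]
    exact (hIntfX Q hQ i (i + 1) (Nat.le_succ i)).sub (hIntfX Q hQ (i + 1) (i + 1) le_rfl)
  have smS2 : ∀ m, StronglyMeasurable[ℱ m] (fun ω =>
      ∑ i ∈ Finset.range m, (f i ω - f (i + 1) ω) * (P[ξ | ℱ (i + 1)]) ω) := by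
    intro m
    apply Finset.stronglyMeasurable_fun_sum
    intro i hi
    have hi' : (ℱ (i + 1) : MeasurableSpace Ω) ≤ ℱ m :=
      ℱ.mono (Nat.succ_le_of_lt (Finset.mem_range.1 hi))
    exact (((hf_adapted i).stronglyMeasurable.mono ((ℱ.mono (Nat.le_succ i)).trans hi')).sub
      ((hf_adapted (i + 1)).stronglyMeasurable.mono hi')).mul
      ((stronglyMeasurable_condExp (m := ℱ (i + 1))).mono hi')
  -- core martingale computation
  have part2 : ∀ Q ∈ M, ∀ m : ℕ,
      (Q[(fun ω => f (m + 1) ω * (P[ξ | ℱ (m + 1)]) ω +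
          ∑ i ∈ Finset.range (m + 1),
            (f i ω - f (i + 1) ω) * (P[ξ | ℱ (i + 1)]) ω) | ℱ m]) =ᵐ[Q]
      fun ω => f m ω * (P[ξ | ℱ m]) ω +
        ∑ i ∈ Finset.range m, (f i ω - f (i + 1) ω) * (P[ξ | ℱ (i + 1)]) ω := by
    intro Q hQ m
    haveI := hM_prob Q hQ
    have hF : (fun ω => f (m + 1) ω * (P[ξ | ℱ (m + 1)]) ω +
          ∑ i ∈ Finset.range (m + 1), (f i ω - f (i + 1) ω) * (P[ξ | ℱ (i + 1)]) ω)
        = (fun ω => f m ω * (P[ξ | ℱ (m + 1)]) ω) + (fun ω =>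
          ∑ i ∈ Finset.range m, (f i ω - f (i + 1) ω) * (P[ξ | ℱ (i + 1)]) ω) := by
      funext ω
      simp only [Pi.add_apply, Finset.sum_range_succ]
      ring
    rw [hF]
    have IntS1 : Integrable (fun ω => f m ω * (P[ξ | ℱ (m + 1)]) ω) Q :=
      hIntfX Q hQ m (m + 1) (Nat.le_succ m)
    have IntS2 : Integrable (fun ω =>
        ∑ i ∈ Finset.range m, (f i ω - f (i + 1) ω) * (P[ξ | ℱ (i + 1)]) ω) Q := by
      apply integrable_finset_sum
      exact fun i _ => hsummand Q hQ i
    refine (condExp_add IntS1 IntS2 _).trans ?_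
    have e2 : (Q[(fun ω =>
        ∑ i ∈ Finset.range m, (f i ω - f (i + 1) ω) * (P[ξ | ℱ (i + 1)]) ω) | ℱ m])
        = fun ω => ∑ i ∈ Finset.range m, (f i ω - f (i + 1) ω) * (P[ξ | ℱ (i + 1)]) ω :=
      condExp_of_stronglyMeasurable (hle m) (smS2 m) IntS2
    have hA1 : (Q[(fun ω => f m ω * (P[ξ | ℱ (m + 1)]) ω) | ℱ m]) =ᵐ[Q]
        fun ω => f m ω * (P[ξ | ℱ m]) ω := by
      have e1 : (fun ω => f m ω * (P[ξ | ℱ (m + 1)]) ω) =ᵐ[Q]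
          (Q[(fun ω => f m ω * ξ ω) | ℱ (m + 1)]) :=
        (pullij Q hQ m (m + 1) (Nat.le_succ m)).symm
      calc (Q[(fun ω => f m ω * (P[ξ | ℱ (m + 1)]) ω) | ℱ m])
          =ᵐ[Q] (Q[(Q[(fun ω => f m ω * ξ ω) | ℱ (m + 1)]) | ℱ m]) := condExp_congr_ae e1
        _ =ᵐ[Q] (Q[(fun ω => f m ω * ξ ω) | ℱ m]) :=
            condExp_condExp_of_le (ℱ.mono (Nat.le_succ m)) (hle (m + 1))
        _ =ᵐ[Q] fun ω => f m ω * (P[ξ | ℱ m]) ω := pullij Q hQ m m le_rfl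
    rw [e2]
    filter_upwards [hA1] with ω h1
    simp only [Pi.add_apply]
    rw [h1]
  refine ⟨part1, part2, ?_⟩
  set g : ℕ → Ω → ℝ := fun m ω =>
    ∑ i ∈ Finset.range m, max 0 ((f i ω - f (i + 1) ω) * (P[ξ | ℱ (i + 1)]) ω) with hg
  set Mart : ℕ → Ω → ℝ := fun m ω => f m ω * (P[ξ | ℱ m]) ω + g m ω with hMart
  have smg : ∀ m, StronglyMeasurable[ℱ m] (g m) := by
    intro m
    apply Finset.stronglyMeasurable_fun_sum
    intro i hi
    have hi' : (ℱ (i + 1) : MeasurableSpace Ω) ≤ ℱ m :=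
      ℱ.mono (Nat.succ_le_of_lt (Finset.mem_range.1 hi))
    have h0 : StronglyMeasurable[ℱ m] (fun _ : Ω => (0 : ℝ)) := stronglyMeasurable_const
    have h1 : StronglyMeasurable[ℱ m]
        (fun ω => (f i ω - f (i + 1) ω) * (P[ξ | ℱ (i + 1)]) ω) :=
      (((hf_adapted i).stronglyMeasurable.mono ((ℱ.mono (Nat.le_succ i)).trans hi')).sub
        ((hf_adapted (i + 1)).stronglyMeasurable.mono hi')).mul
        ((stronglyMeasurable_condExp (m := ℱ (i + 1))).mono hi')
    have h2 := @StronglyMeasurable.sup Ω ℝ _ _ (ℱ m) _ _ _ h0 h1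
    exact h2
  have hMg : ∀ Q ∈ M, ∀ m, (Mart m) =ᵐ[Q] (fun ω => f m ω * (P[ξ | ℱ m]) ω +
      ∑ i ∈ Finset.range m, (f i ω - f (i + 1) ω) * (P[ξ | ℱ (i + 1)]) ω) := by
    intro Q hQ m
    have hae : ∀ᵐ ω ∂Q, ∀ i, 0 ≤ (f i ω - f (i + 1) ω) * (P[ξ | ℱ (i + 1)]) ω :=
      ae_all_iff.2 fun i => part1 Q hQ i
    filter_upwards [hae] with ω hω
    rw [hMart]
    simp only
    congr 1
    exact Finset.sum_congr rfl fun i _ => max_eq_right (hω i)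
  have hMint : ∀ Q ∈ M, ∀ m, Integrable (Mart m) Q := by
    intro Q hQ m
    haveI := hM_prob Q hQ
    have h1 : Integrable (fun ω => f m ω * (P[ξ | ℱ m]) ω +
        ∑ i ∈ Finset.range m, (f i ω - f (i + 1) ω) * (P[ξ | ℱ (i + 1)]) ω) Q :=
      (hIntfX Q hQ m m le_rfl).add (integrable_finset_sum _ fun i _ => hsummand Q hQ i)
    exact h1.congr (hMg Q hQ m).symm
  refine ⟨Mart, g, ?_, (fun m => (smg m).measurable), ?_, ?_, ?_⟩
  · intro Q hQ
    haveI := hM_prob Q hQ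
    refine martingale_nat ?_ (hMint Q hQ) ?_
    · exact fun m => ((hf_adapted m).stronglyMeasurable.mul (stronglyMeasurable_condExp (m := ℱ m))).add (smg m)
    · intro m
      refine (hMg Q hQ m).trans (((part2 Q hQ m).symm).trans
        (condExp_congr_ae (hMg Q hQ (m + 1)).symm))
  · intro ω; simp [hg]
  · intro ω
    apply monotone_nat_of_le_succ
    intro k
    rw [hg]
    simp only [Finset.sum_range_succ]
    exact le_add_of_nonneg_right (le_max_left 0 _)
  · intro Q hQ m
    exact Filter.Eventually.of_forall fun ω => (add_sub_cancel_right _ _).symm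
end
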